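/- arXiv:2309.06985 — 8 statements merged into one kernel-verified Lean document; each statement's English description precedes it below -/
import Mathlib

section
/- The compositional precision matrix Ω_c = Ω₀ − Ω₀ 1_p 1_pᵀ Ω₀ / (1_pᵀ Ω₀ 1_p) is the Moore–Penrose pseudoinverse of the centered log-ratio covariance matrix Σ_c = G Σ₀ G; that is, Σ_c Ω_c Σ_c = Σ_c, Ω_c Σ_c Ω_c = Ω_c, and both products Σ_c Ω_c and Ω_c Σ_c are symmetric matrices. -/
open Matrix

noncomputable section

/-- The all-ones vector in `ℝ^p`. -/
def onesV (p : ℕ) : Fin p → ℝ := fun _ => 1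

/-- The centering matrix `G = I_p − p⁻¹ 1_p 1_pᵀ`. -/
def Gmat (p : ℕ) : Matrix (Fin p) (Fin p) ℝ :=
  1 - (p : ℝ)⁻¹ • Matrix.vecMulVec (onesV p) (onesV p)

/-- The compositional precision matrix `Ω_c = Ω₀ − Ω₀ 1_p 1_pᵀ Ω₀ / (1_pᵀ Ω₀ 1_p)`. -/
def OmegaC {p : ℕ} (Ω : Matrix (Fin p) (Fin p) ℝ) : Matrix (Fin p) (Fin p) ℝ :=
  Ω - (onesV p ⬝ᵥ Ω.mulVec (onesV p))⁻¹ •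
    Matrix.vecMulVec (Ω.mulVec (onesV p)) (Matrix.vecMul (onesV p) Ω)

/-- The centered log-ratio covariance matrix `Σ_c = G Σ₀ G` with `Σ₀ = Ω₀⁻¹`. -/
def SigmaC {p : ℕ} (Ω : Matrix (Fin p) (Fin p) ℝ) : Matrix (Fin p) (Fin p) ℝ :=
  Gmat p * Ω⁻¹ * Gmat p

lemma vmv_mul {p : ℕ} (a b : Fin p → ℝ) (M : Matrix (Fin p) (Fin p) ℝ) :
    Matrix.vecMulVec a b * M = Matrix.vecMulVec a (Matrix.vecMul b M) := by
  ext i j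
  simp only [Matrix.mul_apply, Matrix.vecMulVec_apply, Matrix.vecMul, dotProduct,
    Finset.mul_sum]
  exact Finset.sum_congr rfl fun x _ => by ring

lemma mul_vmv {p : ℕ} (a b : Fin p → ℝ) (M : Matrix (Fin p) (Fin p) ℝ) :
    M * Matrix.vecMulVec a b = Matrix.vecMulVec (M.mulVec a) b := by
  ext i j
  simp only [Matrix.mul_apply, Matrix.vecMulVec_apply, Matrix.mulVec, dotProduct,
    Finset.sum_mul]
  exact Finset.sum_congr rfl fun x _ => by ring

lemma vm_vmv {p : ℕ} (a b c : Fin p → ℝ) :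
    Matrix.vecMul a (Matrix.vecMulVec b c) = (a ⬝ᵥ b) • c := by
  ext j
  simp only [Matrix.vecMul, Matrix.vecMulVec_apply, dotProduct, Pi.smul_apply,
    smul_eq_mul, Finset.sum_mul]
  exact Finset.sum_congr rfl fun x _ => by ring

lemma vmv_mv {p : ℕ} (a b c : Fin p → ℝ) :
    (Matrix.vecMulVec a b).mulVec c = (b ⬝ᵥ c) • a := by
  ext i
  simp only [Matrix.mulVec, Matrix.vecMulVec_apply, dotProduct, Pi.smul_apply,
    smul_eq_mul, Finset.sum_mul]
  exact Finset.sum_congr rfl fun x _ => by ring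

lemma vm_smulM {p : ℕ} (v : Fin p → ℝ) (c : ℝ) (M : Matrix (Fin p) (Fin p) ℝ) :
    Matrix.vecMul v (c • M) = c • Matrix.vecMul v M := by
  ext j
  simp [Matrix.vecMul, dotProduct, Finset.mul_sum, mul_left_comm]

lemma mv_smulM {p : ℕ} (v : Fin p → ℝ) (c : ℝ) (M : Matrix (Fin p) (Fin p) ℝ) :
    (c • M).mulVec v = c • M.mulVec v := by
  ext i
  simp only [Matrix.mulVec, dotProduct, Pi.smul_apply, Matrix.smul_apply, smul_eq_mul,
    Finset.mul_sum]
  exact Finset.sum_congr rfl fun x _ => by ring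

lemma vmv_smul_right {p : ℕ} (a b : Fin p → ℝ) (c : ℝ) :
    Matrix.vecMulVec a (c • b) = c • Matrix.vecMulVec a b := by
  ext i j; simp [Matrix.vecMulVec_apply, mul_comm, mul_left_comm]

lemma vmv_transpose {p : ℕ} (a b : Fin p → ℝ) :
    (Matrix.vecMulVec a b)ᵀ = Matrix.vecMulVec b a := by
  ext i j; simp [Matrix.vecMulVec_apply, mul_comm]

lemma ones_dot_ones (p : ℕ) : onesV p ⬝ᵥ onesV p = (p : ℝ) := by
  simp [dotProduct, onesV]

lemma Gmat_transpose (p : ℕ) : (Gmat p)ᵀ = Gmat p := by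
  simp [Gmat, transpose_sub, transpose_smul, vmv_transpose]

lemma Gmat_mul_self {p : ℕ} (hp : p ≠ 0) : Gmat p * Gmat p = Gmat p := by
  have hpc : ((p : ℝ))⁻¹ * (p : ℝ) = 1 := inv_mul_cancel₀ (by exact_mod_cast hp)
  simp only [Gmat, sub_mul, mul_sub, one_mul, mul_one, Matrix.smul_mul, Matrix.mul_smul,
    vmv_mul, vm_vmv, ones_dot_ones, vmv_smul_right, smul_smul]
  rw [hpc, mul_one]
  abel

lemma Gmat_mv_ones {p : ℕ} (hp : p ≠ 0) : (Gmat p).mulVec (onesV p) = 0 := by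
  simp only [Gmat, Matrix.sub_mulVec, Matrix.one_mulVec, mv_smulM, vmv_mv, ones_dot_ones,
    smul_smul, inv_mul_cancel₀ (show (p:ℝ) ≠ 0 by exact_mod_cast hp), one_smul, sub_self]

section main
variable {p : ℕ}

lemma s_pos (hp : 2 ≤ p) (Ω : Matrix (Fin p) (Fin p) ℝ) (hΩ : Ω.PosDef) :
    0 < onesV p ⬝ᵥ Ω.mulVec (onesV p) := by
  have h := hΩ.dotProduct_mulVec_pos (x := onesV p) (by
    intro h
    have := congrFun h ⟨0, by omega⟩
    simp [onesV] at this)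
  simpa [dotProduct, Matrix.mulVec] using h

lemma omega_symm (Ω : Matrix (Fin p) (Fin p) ℝ) (hΩ : Ω.PosDef) :
    Matrix.vecMul (onesV p) Ω = Ω.mulVec (onesV p) := by
  ext j
  have hsym : ∀ a b, Ω a b = Ω b a := fun a b => by
    have := congrFun (congrFun hΩ.isHermitian.eq a) b
    simpa [Matrix.conjTranspose_apply] using this.symm
  simp only [Matrix.vecMul, Matrix.mulVec, dotProduct]
  exact Finset.sum_congr rfl fun x _ => by rw [hsym x j]; ring

lemma onesV_vecMul_omegaC (hp : 2 ≤ p) (Ω : Matrix (Fin p) (Fin p) ℝ) (hΩ : Ω.PosDef) :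
    Matrix.vecMul (onesV p) (OmegaC Ω) = 0 := by
  have hs := (s_pos hp Ω hΩ).ne'
  simp only [OmegaC, Matrix.vecMul_sub, vm_smulM, vm_vmv]
  rw [smul_smul, inv_mul_cancel₀ hs, one_smul, omega_symm Ω hΩ, sub_self]

lemma omegaC_mv_ones (hp : 2 ≤ p) (Ω : Matrix (Fin p) (Fin p) ℝ) (hΩ : Ω.PosDef) :
    (OmegaC Ω).mulVec (onesV p) = 0 := by
  have hs := (s_pos hp Ω hΩ).ne'
  simp only [OmegaC, Matrix.sub_mulVec, mv_smulM, vmv_mv]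
  rw [omega_symm Ω hΩ, dotProduct_comm, smul_smul,
    inv_mul_cancel₀ (by rwa [dotProduct_comm] at hs), one_smul, sub_self]

lemma Gmat_mul_omegaC (hp : 2 ≤ p) (Ω : Matrix (Fin p) (Fin p) ℝ) (hΩ : Ω.PosDef) :
    Gmat p * OmegaC Ω = OmegaC Ω := by
  have h0 : Matrix.vecMulVec (onesV p) (0 : Fin p → ℝ) = 0 := by
    ext i j; simp [Matrix.vecMulVec_apply]
  rw [Gmat, sub_mul, one_mul, Matrix.smul_mul, vmv_mul, onesV_vecMul_omegaC hp Ω hΩ, h0,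
    smul_zero, sub_zero]

lemma omegaC_mul_Gmat (hp : 2 ≤ p) (Ω : Matrix (Fin p) (Fin p) ℝ) (hΩ : Ω.PosDef) :
    OmegaC Ω * Gmat p = OmegaC Ω := by
  have h0 : Matrix.vecMulVec (0 : Fin p → ℝ) (onesV p) = 0 := by
    ext i j; simp [Matrix.vecMulVec_apply]
  rw [Gmat, mul_sub, mul_one, Matrix.mul_smul, mul_vmv, omegaC_mv_ones hp Ω hΩ, h0,
    smul_zero, sub_zero]

lemma inv_mul_omegaC (hp : 2 ≤ p) (Ω : Matrix (Fin p) (Fin p) ℝ) (hΩ : Ω.PosDef) :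
    Ω⁻¹ * OmegaC Ω = 1 - (onesV p ⬝ᵥ Ω.mulVec (onesV p))⁻¹ •
      Matrix.vecMulVec (onesV p) (Matrix.vecMul (onesV p) Ω) := by
  have hdet : IsUnit Ω.det := isUnit_iff_ne_zero.mpr hΩ.det_pos.ne'
  have h : Ω⁻¹.mulVec (Ω.mulVec (onesV p)) = onesV p := by
    rw [Matrix.mulVec_mulVec, Matrix.nonsing_inv_mul Ω hdet, Matrix.one_mulVec]
  rw [OmegaC, mul_sub, Matrix.mul_smul, mul_vmv, h, Matrix.nonsing_inv_mul Ω hdet]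

lemma sigmaC_mul_omegaC (hp : 2 ≤ p) (Ω : Matrix (Fin p) (Fin p) ℝ) (hΩ : Ω.PosDef) :
    SigmaC Ω * OmegaC Ω = Gmat p := by
  have hp0 : p ≠ 0 := by omega
  have h0 : Matrix.vecMulVec (0 : Fin p → ℝ) (Matrix.vecMul (onesV p) Ω) = 0 := by
    ext i j; simp [Matrix.vecMulVec_apply]
  calc SigmaC Ω * OmegaC Ω = Gmat p * Ω⁻¹ * (Gmat p * OmegaC Ω) := by
        simp [SigmaC, mul_assoc]
    _ = Gmat p * (Ω⁻¹ * OmegaC Ω) := by rw [Gmat_mul_omegaC hp Ω hΩ, mul_assoc]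
    _ = Gmat p := by
        rw [inv_mul_omegaC hp Ω hΩ, mul_sub, mul_one, Matrix.mul_smul, mul_vmv,
          Gmat_mv_ones hp0, h0, smul_zero, sub_zero]

lemma omegaC_symm (Ω : Matrix (Fin p) (Fin p) ℝ) (hΩ : Ω.PosDef) :
    (OmegaC Ω)ᵀ = OmegaC Ω := by
  have hΩt : Ωᵀ = Ω := by
    have := hΩ.isHermitian.eq
    ext i j
    have := congrFun (congrFun this i) j
    simpa [Matrix.conjTranspose_apply] using this
  rw [OmegaC, transpose_sub, transpose_smul, vmv_transpose, hΩt, omega_symm Ω hΩ]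

lemma sigmaC_symm (Ω : Matrix (Fin p) (Fin p) ℝ) (hΩ : Ω.PosDef) :
    (SigmaC Ω)ᵀ = SigmaC Ω := by
  have hΩt : Ω⁻¹ᵀ = Ω⁻¹ := by
    rw [Matrix.transpose_nonsing_inv]
    congr 1
    have := hΩ.isHermitian.eq
    ext i j
    have := congrFun (congrFun this i) j
    simpa [Matrix.conjTranspose_apply] using this
  rw [SigmaC, transpose_mul, transpose_mul, Gmat_transpose, hΩt, mul_assoc]

lemma omegaC_mul_sigmaC (hp : 2 ≤ p) (Ω : Matrix (Fin p) (Fin p) ℝ) (hΩ : Ω.PosDef) :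
    OmegaC Ω * SigmaC Ω = Gmat p := by
  have := congrArg Matrix.transpose (sigmaC_mul_omegaC hp Ω hΩ)
  rwa [transpose_mul, omegaC_symm Ω hΩ, sigmaC_symm Ω hΩ, Gmat_transpose] at this

end main

/-- `Ω_c` is the Moore–Penrose pseudoinverse of `Σ_c`. -/
theorem omegaC_is_moore_penrose_of_sigmaC (p : ℕ) (hp : 2 ≤ p)
    (Ω₀ : Matrix (Fin p) (Fin p) ℝ) (hΩ₀ : Ω₀.PosDef) :
    SigmaC Ω₀ * OmegaC Ω₀ * SigmaC Ω₀ = SigmaC Ω₀ ∧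
    OmegaC Ω₀ * SigmaC Ω₀ * OmegaC Ω₀ = OmegaC Ω₀ ∧
    (SigmaC Ω₀ * OmegaC Ω₀)ᵀ = SigmaC Ω₀ * OmegaC Ω₀ ∧
    (OmegaC Ω₀ * SigmaC Ω₀)ᵀ = OmegaC Ω₀ * SigmaC Ω₀ := by
  have hp0 : p ≠ 0 := by omega
  refine ⟨?_, ?_, ?_, ?_⟩
  · rw [sigmaC_mul_omegaC hp Ω₀ hΩ₀, SigmaC, ← mul_assoc, ← mul_assoc,
      Gmat_mul_self hp0]
  · rw [omegaC_mul_sigmaC hp Ω₀ hΩ₀, Gmat_mul_omegaC hp Ω₀ hΩ₀]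
  · rw [sigmaC_mul_omegaC hp Ω₀ hΩ₀, Gmat_transpose]
  · rw [omegaC_mul_sigmaC hp Ω₀ hΩ₀, Gmat_transpose]

end
end

section
/- For every real ρ > 0, the matrix Σ_c + ρ v_p v_pᵀ is invertible and its inverse equals Ω_c + ρ⁻¹ v_p v_pᵀ; that is, (Σ_c + ρ v_p v_pᵀ)(Ω_c + ρ⁻¹ v_p v_pᵀ) = I_p. -/
open Matrix

noncomputable section

/-- The entrywise `ℓ∞`-norm `‖A‖_max = max_{i,j} |a_ij|`. -/
def maxNorm {p : ℕ} (A : Matrix (Fin p) (Fin p) ℝ) : ℝ := ⨆ i, ⨆ j, |A i j|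

/-- The matrix `ℓ1`-norm `‖A‖_{L1} = max_j Σ_i |a_ij|`. -/
def l1Norm {p : ℕ} (A : Matrix (Fin p) (Fin p) ℝ) : ℝ := ⨆ j, ∑ i, |A i j|

/-- The vector `v_p = 1_p/√p`. -/
def vP (p : ℕ) : Fin p → ℝ := fun _ => (Real.sqrt p)⁻¹

/- ### Auxiliary lemmas -/

lemma mul_vecMulVec' {p : ℕ} (M : Matrix (Fin p) (Fin p) ℝ) (u w : Fin p → ℝ) :
    M * Matrix.vecMulVec u w = Matrix.vecMulVec (M *ᵥ u) w := by
  ext i j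
  simp [Matrix.mul_apply, Matrix.vecMulVec_apply, Matrix.mulVec, dotProduct,
    Finset.sum_mul, mul_assoc]

lemma vecMulVec_mul' {p : ℕ} (M : Matrix (Fin p) (Fin p) ℝ) (u w : Fin p → ℝ) :
    Matrix.vecMulVec u w * M = Matrix.vecMulVec u (Matrix.vecMul w M) := by
  ext i j
  simp [Matrix.mul_apply, Matrix.vecMulVec_apply, Matrix.vecMul, dotProduct,
    Finset.mul_sum, mul_assoc]

lemma vecMulVec_mul_vecMulVec' {p : ℕ} (u w x y : Fin p → ℝ) :
    Matrix.vecMulVec u w * Matrix.vecMulVec x y = (w ⬝ᵥ x) • Matrix.vecMulVec u y := by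
  ext i j
  simp only [Matrix.mul_apply, Matrix.vecMulVec_apply, Matrix.smul_apply,
    dotProduct, smul_eq_mul, Finset.sum_mul]
  exact Finset.sum_congr rfl fun k _ => by ring

lemma vecMul_smul' {p : ℕ} (x : Fin p → ℝ) (c : ℝ) (M : Matrix (Fin p) (Fin p) ℝ) :
    Matrix.vecMul x (c • M) = c • Matrix.vecMul x M := by
  funext j
  simp [Matrix.vecMul, dotProduct, Finset.mul_sum, mul_left_comm]

lemma vecMulVec_zero_left {p : ℕ} (w : Fin p → ℝ) :
    Matrix.vecMulVec (0 : Fin p → ℝ) w = 0 := by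
  ext i j; simp [Matrix.vecMulVec_apply]

lemma vecMulVec_zero_right {p : ℕ} (u : Fin p → ℝ) :
    Matrix.vecMulVec u (0 : Fin p → ℝ) = 0 := by
  ext i j; simp [Matrix.vecMulVec_apply]

/-- for every `ρ > 0`, `Σ_c + ρ v_p v_pᵀ` is invertible with inverse
`Ω_c + ρ⁻¹ v_p v_pᵀ`. -/
theorem sigmaC_rank_one_correction_inverse (p : ℕ) (hp : 2 ≤ p)
    (Ω₀ : Matrix (Fin p) (Fin p) ℝ) (hΩ₀ : Ω₀.PosDef) (ρ : ℝ) (hρ : 0 < ρ) :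
    IsUnit (SigmaC Ω₀ + ρ • Matrix.vecMulVec (vP p) (vP p)) ∧
    (SigmaC Ω₀ + ρ • Matrix.vecMulVec (vP p) (vP p)) *
      (OmegaC Ω₀ + ρ⁻¹ • Matrix.vecMulVec (vP p) (vP p)) = 1 := by
  have hp0 : (0 : ℝ) < p := by positivity
  have hsp : Real.sqrt p ≠ 0 := by positivity
  have hones : (onesV p) ≠ 0 := by
    intro h
    have := congrFun h ⟨0, by omega⟩
    simp [onesV] at this
  -- a := 1ᵀ Ω 1 is positive
  set a : ℝ := onesV p ⬝ᵥ Ω₀ *ᵥ onesV p with ha_def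
  have ha : a ≠ 0 := by
    have := hΩ₀.dotProduct_mulVec_pos hones
    simp only [star_trivial] at this
    exact ne_of_gt this
  -- G kills v and 1 (on both sides)
  have hGv : Gmat p *ᵥ vP p = 0 := by
    funext i
    simp only [Gmat, Matrix.sub_mulVec, Matrix.smul_mulVec, Matrix.one_mulVec,
      Pi.sub_apply, Pi.smul_apply, smul_eq_mul, Pi.zero_apply]
    have h2 : (Matrix.vecMulVec (onesV p) (onesV p) *ᵥ vP p) i = p * (Real.sqrt p)⁻¹ := by
      simp [Matrix.mulVec, dotProduct, Matrix.vecMulVec_apply, onesV, vP]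
    rw [h2, vP, inv_mul_cancel_left₀ hp0.ne']
    simp
  have hG1 : Gmat p *ᵥ onesV p = 0 := by
    funext i
    simp only [Gmat, Matrix.sub_mulVec, Matrix.smul_mulVec, Matrix.one_mulVec,
      Pi.sub_apply, Pi.smul_apply, smul_eq_mul, Pi.zero_apply]
    have h2 : (Matrix.vecMulVec (onesV p) (onesV p) *ᵥ onesV p) i = p := by
      simp [Matrix.mulVec, dotProduct, Matrix.vecMulVec_apply, onesV]
    rw [h2, inv_mul_cancel₀ hp0.ne']
    simp [onesV]
  -- 1ᵀ Ωc = 0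
  have h1Ωc : Matrix.vecMul (onesV p) (OmegaC Ω₀) = 0 := by
    have hvm : Matrix.vecMul (onesV p)
        (Matrix.vecMulVec (Ω₀ *ᵥ onesV p) (Matrix.vecMul (onesV p) Ω₀)) =
        a • Matrix.vecMul (onesV p) Ω₀ := by
      funext j
      simp only [Matrix.vecMul, Matrix.vecMulVec_apply, dotProduct, Pi.smul_apply,
        smul_eq_mul, ha_def]
      conv_rhs => rw [Finset.sum_mul]
      exact Finset.sum_congr rfl fun k _ => by ring
    rw [OmegaC, Matrix.vecMul_sub, vecMul_smul', hvm, smul_smul,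
      ← ha_def, inv_mul_cancel₀ ha, one_smul, sub_self]
  -- v ⬝ᵥ v = 1
  have hvv : vP p ⬝ᵥ vP p = 1 := by
    simp only [dotProduct, vP, Finset.sum_const, Finset.card_univ, Fintype.card_fin,
      nsmul_eq_mul]
    rw [← mul_inv, Real.mul_self_sqrt hp0.le, mul_inv_cancel₀ hp0.ne']
  -- vvᵀ = p⁻¹ • 11ᵀ
  have hvv1 : Matrix.vecMulVec (vP p) (vP p) =
      (p : ℝ)⁻¹ • Matrix.vecMulVec (onesV p) (onesV p) := by
    ext i j
    simp only [Matrix.vecMulVec_apply, vP, onesV, Matrix.smul_apply, smul_eq_mul, mul_one]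
    rw [← mul_inv, Real.mul_self_sqrt hp0.le]
  -- Σc * vvᵀ = 0
  have hSv : SigmaC Ω₀ * Matrix.vecMulVec (vP p) (vP p) = 0 := by
    rw [SigmaC, Matrix.mul_assoc, Matrix.mul_assoc, mul_vecMulVec' (Gmat p), hGv,
      vecMulVec_zero_left, Matrix.mul_zero, Matrix.mul_zero]
  -- vvᵀ * Ωc = 0
  have hvΩ : Matrix.vecMulVec (vP p) (vP p) * OmegaC Ω₀ = 0 := by
    rw [vecMulVec_mul']
    have : Matrix.vecMul (vP p) (OmegaC Ω₀) = 0 := by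
      have hv : vP p = (Real.sqrt p)⁻¹ • onesV p := by
        funext i; simp [vP, onesV]
      rw [hv]
      funext j
      simp only [Matrix.vecMul, dotProduct, Pi.smul_apply, smul_eq_mul, Pi.zero_apply]
      have := congrFun h1Ωc j
      simp only [Matrix.vecMul, dotProduct, Pi.zero_apply] at this
      simp only [mul_assoc]
      rw [← Finset.mul_sum, this, mul_zero]
    rw [this, vecMulVec_zero_right]
  -- Σc * Ωc = G
  have hSO : SigmaC Ω₀ * OmegaC Ω₀ = Gmat p := by
    have hinv : Ω₀⁻¹ * Ω₀ = 1 :=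
      Matrix.nonsing_inv_mul Ω₀ (isUnit_iff_ne_zero.mpr hΩ₀.det_pos.ne')
    -- G * Ωc = Ωc
    have hGΩc : Gmat p * OmegaC Ω₀ = OmegaC Ω₀ := by
      rw [Gmat, Matrix.sub_mul, Matrix.one_mul, Matrix.smul_mul, vecMulVec_mul', h1Ωc,
        vecMulVec_zero_right, smul_zero, sub_zero]
    -- Ω⁻¹ * Ωc = 1 - a⁻¹ • 1 (1ᵀΩ)
    have hSOc : Ω₀⁻¹ * OmegaC Ω₀ =
        1 - a⁻¹ • Matrix.vecMulVec (onesV p) (Matrix.vecMul (onesV p) Ω₀) := by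
      rw [OmegaC, Matrix.mul_sub, hinv, Matrix.mul_smul, mul_vecMulVec']
      rw [Matrix.mulVec_mulVec, hinv, Matrix.one_mulVec]
    calc SigmaC Ω₀ * OmegaC Ω₀
        = Gmat p * Ω₀⁻¹ * (Gmat p * OmegaC Ω₀) := by
          rw [SigmaC, Matrix.mul_assoc, Matrix.mul_assoc]
      _ = Gmat p * (Ω₀⁻¹ * OmegaC Ω₀) := by rw [hGΩc, Matrix.mul_assoc]
      _ = Gmat p := by
          rw [hSOc, Matrix.mul_sub, Matrix.mul_one, Matrix.mul_smul, mul_vecMulVec', hG1,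
            vecMulVec_zero_left, smul_zero, sub_zero]
  -- main computation
  have hmain : (SigmaC Ω₀ + ρ • Matrix.vecMulVec (vP p) (vP p)) *
      (OmegaC Ω₀ + ρ⁻¹ • Matrix.vecMulVec (vP p) (vP p)) = 1 := by
    rw [Matrix.add_mul, Matrix.mul_add, Matrix.mul_add, Matrix.mul_smul, hSv, smul_zero,
      Matrix.smul_mul, hvΩ, smul_zero, Matrix.smul_mul, Matrix.mul_smul,
      vecMulVec_mul_vecMulVec', hvv, one_smul, smul_smul, mul_inv_cancel₀ hρ.ne', one_smul,
      hSO]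
    rw [hvv1, Gmat]
    abel
  exact ⟨⟨⟨_, _, hmain, mul_eq_one_comm.mp hmain⟩, rfl⟩, hmain⟩

end
end

section
/- The compositional precision matrix Ω_c is positive semidefinite, and every nonzero eigenvalue of Ω_c lies between the extreme eigenvalues of Ω₀: if Ω_c x = μ x for some x ≠ 0 and μ ≠ 0, then λ_min(Ω₀) ≤ μ ≤ λ_max(Ω₀). -/
open Matrix

noncomputable section

/-- The smallest eigenvalue of a Hermitian real matrix. -/
def lamMin {p : ℕ} {A : Matrix (Fin p) (Fin p) ℝ} (hA : A.IsHermitian) : ℝ :=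
  ⨅ i, hA.eigenvalues i

/-- The largest eigenvalue of a Hermitian real matrix. -/
def lamMax {p : ℕ} {A : Matrix (Fin p) (Fin p) ℝ} (hA : A.IsHermitian) : ℝ :=
  ⨆ i, hA.eigenvalues i

lemma myVecMulVec_mulVec {p : ℕ} (a b x : Fin p → ℝ) :
    (vecMulVec a b) *ᵥ x = (b ⬝ᵥ x) • a := by
  ext i
  simp only [mulVec, dotProduct, vecMulVec_apply, Pi.smul_apply, smul_eq_mul, Finset.sum_mul]
  exact Finset.sum_congr rfl (fun j _ => by ring)

lemma rayleigh {p : ℕ} {A : Matrix (Fin p) (Fin p) ℝ}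
    (hA : A.IsHermitian) (v : Fin p → ℝ) :
    (⨅ i, hA.eigenvalues i) * (v ⬝ᵥ v) ≤ v ⬝ᵥ A.mulVec v ∧
      v ⬝ᵥ A.mulVec v ≤ (⨆ i, hA.eigenvalues i) * (v ⬝ᵥ v) := by
  set U : Matrix (Fin p) (Fin p) ℝ := (hA.eigenvectorUnitary : Matrix (Fin p) (Fin p) ℝ) with hU
  have hstar : star U = Uᵀ := by
    ext i j; simp [conjTranspose_apply]
  set y : Fin p → ℝ := Uᵀ *ᵥ v with hy
  have h1 : v ⬝ᵥ A.mulVec v = ∑ i, hA.eigenvalues i * (y i)^2 := by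
    conv_lhs => rw [hA.spectral_theorem, Unitary.conjStarAlgAut_apply]
    rw [hstar, ← mulVec_mulVec, ← mulVec_mulVec, dotProduct_mulVec, ← mulVec_transpose, ← hy]
    simp [dotProduct, mulVec_diagonal, sq]
    ring_nf
    congr 1; ext i; ring
  have h2 : v ⬝ᵥ v = ∑ i, (y i)^2 := by
    have huu : U * Uᵀ = 1 := by
      rw [← hstar]; exact Unitary.mul_star_self_of_mem (hA.eigenvectorUnitary).2
    calc v ⬝ᵥ v = v ⬝ᵥ ((U * Uᵀ) *ᵥ v) := by rw [huu, one_mulVec]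
    _ = ∑ i, (y i)^2 := by
        rw [← mulVec_mulVec, dotProduct_mulVec, ← mulVec_transpose, ← hy]
        simp [dotProduct, sq]
  constructor
  · rw [h1, h2, Finset.mul_sum]
    exact Finset.sum_le_sum fun i _ =>
      mul_le_mul_of_nonneg_right (ciInf_le (Set.Finite.bddBelow (Set.finite_range _)) i) (sq_nonneg _)
  · rw [h1, h2, Finset.mul_sum]
    exact Finset.sum_le_sum fun i _ =>
      mul_le_mul_of_nonneg_right (le_ciSup (Set.Finite.bddAbove (Set.finite_range _)) i) (sq_nonneg _)

/-- `Ω_c` is positive semidefinite, and every nonzero eigenvalue of `Ω_c`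
lies between the extreme eigenvalues of `Ω₀`. -/
theorem omegaC_posSemidef_and_eigenvalue_bounds (p : ℕ) (hp : 2 ≤ p)
    (Ω₀ : Matrix (Fin p) (Fin p) ℝ) (hΩ₀ : Ω₀.PosDef) :
    (OmegaC Ω₀).PosSemidef ∧
    ∀ (μ : ℝ) (x : Fin p → ℝ), x ≠ 0 → μ ≠ 0 → (OmegaC Ω₀).mulVec x = μ • x →
      lamMin hΩ₀.isHermitian ≤ μ ∧ μ ≤ lamMax hΩ₀.isHermitian := by
  haveI : NeZero p := ⟨by omega⟩
  set o : Fin p → ℝ := onesV p with ho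
  set u : Fin p → ℝ := Ω₀ *ᵥ o with hu
  set s : ℝ := o ⬝ᵥ u with hs
  have hsymT : Ω₀ᵀ = Ω₀ := hΩ₀.isHermitian
  have hsym : ∀ i j, Ω₀ j i = Ω₀ i j := fun i j => congrFun (congrFun hsymT i) j
  have hvm : o ᵥ* Ω₀ = u := by rw [hu, ← mulVec_transpose, hsymT]
  have hone : o ≠ 0 := by
    intro h
    have := congrFun h ⟨0, by omega⟩
    simp [ho, onesV] at this
  have hspos : 0 < s := by
    have := hΩ₀.dotProduct_mulVec_pos hone
    simpa [hs, hu] using this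
  have hsne : s ≠ 0 := ne_of_gt hspos
  have hOC : OmegaC Ω₀ = Ω₀ - s⁻¹ • vecMulVec u u := by
    rw [OmegaC, ← ho, ← hu, ← hs, hvm]
  have hmv : ∀ x : Fin p → ℝ, (OmegaC Ω₀) *ᵥ x = Ω₀ *ᵥ x - (s⁻¹ * (u ⬝ᵥ x)) • u := by
    intro x
    rw [hOC, sub_mulVec, smul_mulVec, myVecMulVec_mulVec, smul_smul]
  have houx : ∀ x : Fin p → ℝ, o ⬝ᵥ (Ω₀ *ᵥ x) = u ⬝ᵥ x := by
    intro x; rw [dotProduct_mulVec, hvm]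
  have hquad : ∀ x : Fin p → ℝ, x ⬝ᵥ ((OmegaC Ω₀) *ᵥ x)
      = x ⬝ᵥ (Ω₀ *ᵥ x) - s⁻¹ * (u ⬝ᵥ x)^2 := by
    intro x
    rw [hmv, dotProduct_sub, dotProduct_smul, smul_eq_mul, dotProduct_comm x u, sq]
    ring
  -- key identity: quadratic form of OmegaC equals quadratic form of Ω₀ at shifted vector
  have hkey : ∀ x : Fin p → ℝ,
      x ⬝ᵥ ((OmegaC Ω₀) *ᵥ x)
        = (x - (s⁻¹ * (u ⬝ᵥ x)) • o) ⬝ᵥ (Ω₀ *ᵥ (x - (s⁻¹ * (u ⬝ᵥ x)) • o)) := by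
    intro x
    set t : ℝ := s⁻¹ * (u ⬝ᵥ x) with ht
    rw [hquad, mulVec_sub, mulVec_smul, ← hu, sub_dotProduct, smul_dotProduct,
      dotProduct_sub, dotProduct_sub, dotProduct_smul, dotProduct_smul,
      houx x, dotProduct_comm x u, ← hs]
    simp only [smul_eq_mul, ht]
    field_simp
    ring
  have hherm : (OmegaC Ω₀).IsHermitian := by
    rw [hOC]
    show _ᴴ = _
    ext i j
    simp only [conjTranspose_apply, Matrix.sub_apply, Matrix.smul_apply, vecMulVec_apply, star_trivial,
      smul_eq_mul]
    rw [hsym i j]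
    ring
  have hpsd : (OmegaC Ω₀).PosSemidef := by
    refine PosSemidef.of_dotProduct_mulVec_nonneg hherm fun x => ?_
    have hx := hΩ₀.posSemidef.dotProduct_mulVec_nonneg (x - (s⁻¹ * (u ⬝ᵥ x)) • o)
    simpa [hkey x] using hx
  refine ⟨hpsd, ?_⟩
  intro μ x hx hμ heig
  have hxx : 0 < x ⬝ᵥ x := by
    have hnn : 0 ≤ x ⬝ᵥ x := Finset.sum_nonneg fun i _ => mul_self_nonneg _
    rcases hnn.lt_or_eq with h | h
    · exact h
    · exact absurd (dotProduct_self_eq_zero.mp h.symm) hx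
  -- o ⬝ᵥ x = 0
  have hox : o ⬝ᵥ x = 0 := by
    have h1 : o ⬝ᵥ ((OmegaC Ω₀) *ᵥ x) = 0 := by
      rw [hmv, dotProduct_sub, dotProduct_smul, houx x, smul_eq_mul, ← hs]
      field_simp
      ring
    have h2 : o ⬝ᵥ ((OmegaC Ω₀) *ᵥ x) = μ * (o ⬝ᵥ x) := by
      rw [heig, dotProduct_smul, smul_eq_mul]
    rcases mul_eq_zero.mp (h2 ▸ h1) with h | h
    · exact absurd h hμ
    · exact h
  set t : ℝ := s⁻¹ * (u ⬝ᵥ x) with ht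
  set w : Fin p → ℝ := x - t • o with hw
  have hΩw : Ω₀ *ᵥ w = μ • x := by
    rw [hw, mulVec_sub, mulVec_smul, ← hu, ← hmv, heig]
  have h3 : w ⬝ᵥ (Ω₀ *ᵥ w) = μ * (x ⬝ᵥ x) := by
    rw [hΩw, dotProduct_smul, smul_eq_mul, hw, sub_dotProduct, smul_dotProduct, hox]
    simp
  have h4 : x ⬝ᵥ x ≤ w ⬝ᵥ w := by
    have : w ⬝ᵥ w = x ⬝ᵥ x + t^2 * (o ⬝ᵥ o) := by
      rw [hw, sub_dotProduct, dotProduct_sub, dotProduct_sub, smul_dotProduct,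
        smul_dotProduct, dotProduct_smul, dotProduct_smul, hox, dotProduct_comm x o, hox]
      simp only [smul_eq_mul, sq]
      ring
    rw [this]
    have hoo : 0 ≤ o ⬝ᵥ o := Finset.sum_nonneg fun i _ => mul_self_nonneg _
    nlinarith [sq_nonneg t]
  have hray := rayleigh hΩ₀.isHermitian
  have hlminpos : 0 < lamMin hΩ₀.isHermitian := by
    obtain ⟨j, hj⟩ := Finite.exists_min hΩ₀.isHermitian.eigenvalues
    calc (0:ℝ) < hΩ₀.isHermitian.eigenvalues j := hΩ₀.eigenvalues_pos j
    _ ≤ lamMin hΩ₀.isHermitian := le_ciInf hj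
  constructor
  · -- lower bound
    have hchain : lamMin hΩ₀.isHermitian * (x ⬝ᵥ x) ≤ μ * (x ⬝ᵥ x) := by
      calc lamMin hΩ₀.isHermitian * (x ⬝ᵥ x)
          ≤ lamMin hΩ₀.isHermitian * (w ⬝ᵥ w) :=
            mul_le_mul_of_nonneg_left h4 hlminpos.le
        _ ≤ w ⬝ᵥ (Ω₀ *ᵥ w) := (hray w).1
        _ = μ * (x ⬝ᵥ x) := h3
    exact le_of_mul_le_mul_right (by simpa [mul_comm] using hchain) hxx
  · -- upper bound
    have hq : μ * (x ⬝ᵥ x) = x ⬝ᵥ ((OmegaC Ω₀) *ᵥ x) := by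
      rw [heig, dotProduct_smul, smul_eq_mul]
    have hchain : μ * (x ⬝ᵥ x) ≤ lamMax hΩ₀.isHermitian * (x ⬝ᵥ x) := by
      calc μ * (x ⬝ᵥ x) = x ⬝ᵥ (Ω₀ *ᵥ x) - s⁻¹ * (u ⬝ᵥ x)^2 := by rw [hq, hquad]
        _ ≤ x ⬝ᵥ (Ω₀ *ᵥ x) := by
            have : 0 ≤ s⁻¹ * (u ⬝ᵥ x)^2 := by positivity
            linarith
        _ ≤ lamMax hΩ₀.isHermitian * (x ⬝ᵥ x) := (hray x).2
    exact le_of_mul_le_mul_right (by simpa [mul_comm] using hchain) hxx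

end
end

section
/- For every index j ∈ {1, …, p}, the diagonal entries of Σ_c and Ω_c satisfy (Σ_c)_{jj} (Ω_c)_{jj} ≥ (1 − 1/p)². -/
open Matrix

noncomputable section

lemma dot_symm' {p : ℕ} {M : Matrix (Fin p) (Fin p) ℝ} (hM : Mᵀ = M)
    (x y : Fin p → ℝ) : x ⬝ᵥ M *ᵥ y = y ⬝ᵥ M *ᵥ x := by
  rw [Matrix.dotProduct_mulVec, ← Matrix.mulVec_transpose, hM, dotProduct_comm]

lemma cs_posdef {p : ℕ} {M : Matrix (Fin p) (Fin p) ℝ} (hM : M.PosDef)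
    (x y : Fin p → ℝ) :
    (x ⬝ᵥ M *ᵥ y) ^ 2 ≤ (x ⬝ᵥ M *ᵥ x) * (y ⬝ᵥ M *ᵥ y) := by
  have hMt : Mᵀ = M := by have := hM.1; simp at this; exact this
  by_cases hy : y = 0
  · simp [hy]
  set a := x ⬝ᵥ M *ᵥ x with ha
  set b := x ⬝ᵥ M *ᵥ y with hb
  set c := y ⬝ᵥ M *ᵥ y with hc
  have hcpos : 0 < c := by have := hM.dotProduct_mulVec_pos hy; simpa using this
  have hsym : y ⬝ᵥ M *ᵥ x = b := dot_symm' hMt y x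
  have h0 : 0 ≤ (c • x - b • y) ⬝ᵥ M *ᵥ (c • x - b • y) := by
    have := hM.posSemidef.dotProduct_mulVec_nonneg (c • x - b • y); simpa using this
  have hexp : (c • x - b • y) ⬝ᵥ M *ᵥ (c • x - b • y)
      = c * (c * a) - c * (b * b) - (b * (c * b) - b * (b * c)) := by
    rw [Matrix.mulVec_sub, Matrix.mulVec_smul, Matrix.mulVec_smul,
      sub_dotProduct, smul_dotProduct, smul_dotProduct,
      dotProduct_sub, dotProduct_sub,
      dotProduct_smul, dotProduct_smul, dotProduct_smul,
      dotProduct_smul, hsym]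
    ring_nf
    ring
  rw [hexp] at h0
  nlinarith [hcpos, h0]

/-- `(Σ_c)_{jj} (Ω_c)_{jj} ≥ (1 − 1/p)²` for every `j`. -/
theorem diag_product_lower_bound (p : ℕ) (hp : 2 ≤ p)
    (Ω₀ : Matrix (Fin p) (Fin p) ℝ) (hΩ₀ : Ω₀.PosDef) (j : Fin p) :
    (1 - 1 / (p : ℝ)) ^ 2 ≤ SigmaC Ω₀ j j * OmegaC Ω₀ j j := by
  have hppos : (0:ℝ) < p := by exact_mod_cast Nat.lt_of_lt_of_le Nat.zero_lt_two hp
  have hpne : (p:ℝ) ≠ 0 := hppos.ne'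
  have hΩt : Ω₀ᵀ = Ω₀ := by have := hΩ₀.1; simp at this; exact this
  have hΩel : ∀ i k, Ω₀ i k = Ω₀ k i := by
    intro i k
    conv_lhs => rw [← hΩt]
    exact Matrix.transpose_apply Ω₀ i k
  have hdet : IsUnit Ω₀.det := isUnit_iff_ne_zero.mpr hΩ₀.det_pos.ne'
  set u : Fin p → ℝ := Ω₀ *ᵥ onesV p with hu
  set s : ℝ := onesV p ⬝ᵥ u with hs
  have hones : onesV p ≠ 0 := by
    intro h
    have : (onesV p) ⟨0, Nat.lt_of_lt_of_le Nat.zero_lt_two hp⟩ = 0 := by rw [h]; rfl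
    simp [onesV] at this
  have hspos : 0 < s := by have := hΩ₀.dotProduct_mulVec_pos hones; simpa [hs, hu] using this
  have hsne : s ≠ 0 := hspos.ne'
  set t : ℝ := u j / s with ht
  set v : Fin p → ℝ := fun i => Gmat p j i with hv
  set z : Fin p → ℝ := fun i => (if i = j then (1:ℝ) else 0) - t with hz
  set y : Fin p → ℝ := Ω₀⁻¹ *ᵥ v with hy
  have hΩy : Ω₀ *ᵥ y = v := by
    rw [hy, Matrix.mulVec_mulVec, Matrix.mul_nonsing_inv _ hdet, Matrix.one_mulVec]
  have gE : ∀ a b : Fin p, Gmat p a b = (if a = b then (1:ℝ) else 0) - (p:ℝ)⁻¹ := by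
    intro a b
    simp [Gmat, Matrix.one_apply, Matrix.vecMulVec_apply, onesV, Matrix.sub_apply]
  have hGsymm : ∀ a b : Fin p, Gmat p a b = Gmat p b a := by
    intro a b; rw [gE, gE]; simp [eq_comm]
  -- (A) SigmaC jj = v ⬝ᵥ Ω₀⁻¹ *ᵥ v
  have hA' : SigmaC Ω₀ j j = v ⬝ᵥ Ω₀⁻¹ *ᵥ v := by
    simp only [SigmaC, Matrix.mul_apply, dotProduct, Matrix.mulVec, dotProduct,
      Finset.sum_mul, Finset.mul_sum, hv]
    rw [Finset.sum_comm]
    refine Finset.sum_congr rfl fun k _ => Finset.sum_congr rfl fun l _ => ?_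
    rw [hGsymm l j]
    ring
  have hA : SigmaC Ω₀ j j = y ⬝ᵥ Ω₀ *ᵥ y := by
    rw [hΩy, dotProduct_comm, hA', hy]
  have hsv : ∑ i, v i = 0 := by
    simp only [hv, gE, Finset.sum_sub_distrib, Finset.sum_ite_eq Finset.univ j,
      Finset.mem_univ, if_true, Finset.sum_const, Finset.card_univ, Fintype.card_fin,
      nsmul_eq_mul]
    field_simp
    simp
  have hvj : v j = 1 - (p:ℝ)⁻¹ := by rw [hv]; simp [gE]
  -- (B)
  have hB : y ⬝ᵥ Ω₀ *ᵥ z = 1 - (p:ℝ)⁻¹ := by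
    rw [dot_symm' hΩt, hΩy, dotProduct_comm]
    have hvz : v ⬝ᵥ z = v j - (∑ i, v i) * t := by
      simp only [dotProduct, hz, mul_sub, Finset.sum_sub_distrib, mul_ite, mul_one,
        mul_zero, Finset.sum_ite_eq' Finset.univ j, Finset.mem_univ, if_true,
        ← Finset.sum_mul]
    rw [hvz, hsv, zero_mul, sub_zero, hvj]
  -- entries of Ω₀ *ᵥ z
  have hw : ∀ i, (Ω₀ *ᵥ z) i = Ω₀ i j - t * u i := by
    intro i
    simp only [Matrix.mulVec, dotProduct, hz, mul_sub, Finset.sum_sub_distrib,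
      mul_ite, mul_one, mul_zero, Finset.sum_ite_eq' Finset.univ j, Finset.mem_univ, if_true,
      hu, onesV]
    rw [Finset.mul_sum]
    congr 1
    refine Finset.sum_congr rfl fun k _ => ?_
    ring
  have hsumu : ∑ i, u i = s := by
    rw [hs, dotProduct]; simp [onesV]
  have hsumcol : ∑ i, Ω₀ i j = u j := by
    rw [hu]
    simp only [Matrix.mulVec, dotProduct, onesV, mul_one]
    exact Finset.sum_congr rfl fun i _ => hΩel i j
  -- (C)
  have hC : z ⬝ᵥ Ω₀ *ᵥ z = OmegaC Ω₀ j j := by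
    have h1 : z ⬝ᵥ Ω₀ *ᵥ z = (Ω₀ *ᵥ z) j - t * ∑ i, (Ω₀ *ᵥ z) i := by
      simp only [dotProduct, hz, sub_mul, Finset.sum_sub_distrib, ite_mul, one_mul,
        zero_mul, Finset.sum_ite_eq' Finset.univ j, Finset.mem_univ, if_true, Finset.mul_sum]
    have h2 : ∑ i, (Ω₀ *ᵥ z) i = 0 := by
      simp only [hw, Finset.sum_sub_distrib, hsumcol, ← Finset.mul_sum, hsumu, ht]
      field_simp
      simp
    rw [h1, h2, hw, mul_zero, sub_zero]
    have hvm : (onesV p ᵥ* Ω₀) j = u j := by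
      simp only [Matrix.vecMul, dotProduct, onesV, one_mul]
      exact hsumcol
    simp only [OmegaC, Matrix.sub_apply, Matrix.smul_apply, Matrix.vecMulVec_apply, hvm,
      smul_eq_mul, ← hu, ← hs, ht]
    ring
  have key := cs_posdef hΩ₀ y z
  rw [hB, hC] at key
  rw [hA]
  calc (1 - 1/(p:ℝ))^2 = (1 - (p:ℝ)⁻¹)^2 := by rw [one_div]
    _ ≤ _ := key

end
end

section
/- Suppose R > 1, the eigenvalues of Ω₀ all lie in the interval [1/R, R], and ‖Ω₀‖_{L1} ≤ M_p. Then the entrywise identification error between the basis and compositional precision matrices satisfies R⁻³/p ≤ ‖Ω₀ − Ω_c‖_max ≤ R M_p²/p. -/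
open Matrix

noncomputable section

/-- Spectral lower bound for the quadratic form of a real symmetric matrix. -/
lemma quad_form_ge {p : ℕ} (A : Matrix (Fin p) (Fin p) ℝ) (hA : A.IsHermitian) {c : ℝ}
    (hc : ∀ i, c ≤ hA.eigenvalues i) (x : Fin p → ℝ) :
    c * (x ⬝ᵥ x) ≤ x ⬝ᵥ A.mulVec x := by
  have hU := hA.eigenvectorUnitary.2
  set U : Matrix (Fin p) (Fin p) ℝ := hA.eigenvectorUnitary.1 with hUdef
  have hspec := hA.spectral_theorem
  set y : Fin p → ℝ := (star U).mulVec x with hy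
  have hyy : y ⬝ᵥ y = x ⬝ᵥ x := by
    rw [hy, dotProduct_mulVec, vecMul_mulVec]
    have h1 : star U * U = 1 := (Matrix.mem_unitaryGroup_iff'.mp hU)
    have : (star U)ᵀ * star U = 1 := by
      have : star U = Uᵀ := rfl
      rw [this, transpose_transpose]
      simpa [this] using (Matrix.mem_unitaryGroup_iff.mp hU)
    rw [this]
    simp
  have hquad : x ⬝ᵥ A.mulVec x = ∑ i, hA.eigenvalues i * y i ^ 2 := by
    conv_lhs => rw [hspec]
    rw [Unitary.conjStarAlgAut_apply]
    rw [← mulVec_mulVec, ← mulVec_mulVec, dotProduct_mulVec]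
    have hvm : vecMul x U = y := by
      rw [hy]
      have : star U = Uᵀ := rfl
      rw [this, ← vecMul_transpose, transpose_transpose]
    rw [hvm]
    simp only [mulVec_diagonal, dotProduct, Function.comp, ← hy]
    exact Finset.sum_congr rfl fun i _ => by rw [RCLike.ofReal_real_eq_id, id]; ring
  rw [hquad, ← hyy]
  have : c * (y ⬝ᵥ y) = ∑ i, c * y i ^ 2 := by
    simp [dotProduct, Finset.mul_sum, sq, mul_comm]
  rw [this]
  exact Finset.sum_le_sum fun i _ => mul_le_mul_of_nonneg_right (hc i) (sq_nonneg _)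

/-- if the eigenvalues of `Ω₀` lie in `[1/R, R]` and `‖Ω₀‖_{L1} ≤ M_p`,
then `R⁻³/p ≤ ‖Ω₀ − Ω_c‖_max ≤ R M_p²/p`. -/
theorem identification_error_bounds (p : ℕ) (hp : 2 ≤ p)
    (Ω₀ : Matrix (Fin p) (Fin p) ℝ) (hΩ₀ : Ω₀.PosDef) (R M : ℝ) (hR : 1 < R) (hM : 0 < M)
    (heig : ∀ i, hΩ₀.isHermitian.eigenvalues i ∈ Set.Icc R⁻¹ R)
    (hL1 : l1Norm Ω₀ ≤ M) :
    R⁻¹ ^ 3 / (p : ℝ) ≤ maxNorm (Ω₀ - OmegaC Ω₀) ∧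
    maxNorm (Ω₀ - OmegaC Ω₀) ≤ R * M ^ 2 / (p : ℝ) := by
  haveI : Nonempty (Fin p) := ⟨⟨0, by omega⟩⟩
  have hppos : (0 : ℝ) < p := by exact_mod_cast Nat.lt_of_lt_of_le Nat.zero_lt_two hp
  have hRpos : (0 : ℝ) < R := lt_trans one_pos hR
  have hRinv : (0 : ℝ) < R⁻¹ := inv_pos.mpr hRpos
  set v : Fin p → ℝ := Ω₀.mulVec (onesV p) with hv
  set s : ℝ := onesV p ⬝ᵥ v with hs
  have hsym : Ω₀ᵀ = Ω₀ := hΩ₀.isHermitian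
  -- s ≥ R⁻¹ p
  have hones : (onesV p) ⬝ᵥ (onesV p) = (p : ℝ) := by
    simp [onesV, dotProduct]
  have hslb : R⁻¹ * p ≤ s := by
    have := quad_form_ge Ω₀ hΩ₀.isHermitian (fun i => (heig i).1) (onesV p)
    rwa [hones] at this
  have hspos : 0 < s := lt_of_lt_of_le (by positivity) hslb
  -- the difference matrix
  have hvm : Matrix.vecMul (onesV p) Ω₀ = v := by
    rw [hv]
    conv_lhs => rw [← hsym]
    rw [vecMul_transpose]
  have hdiff : Ω₀ - OmegaC Ω₀ = s⁻¹ • Matrix.vecMulVec v v := by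
    rw [OmegaC, hvm, ← hv, ← hs, sub_sub_cancel]
  have hentry : ∀ i j, (Ω₀ - OmegaC Ω₀) i j = s⁻¹ * (v i * v j) := by
    intro i j
    rw [hdiff]
    simp [Matrix.vecMulVec_apply]
  -- bound on |v i|
  have hvbd : ∀ i, |v i| ≤ M := by
    intro i
    have hv_i : v i = ∑ j, Ω₀ i j := by
      simp [hv, Matrix.mulVec, dotProduct, onesV]
    have h1 : |v i| ≤ ∑ j, |Ω₀ i j| := by
      rw [hv_i]; exact Finset.abs_sum_le_sum_abs _ _
    have h2 : ∑ j, |Ω₀ i j| = ∑ j, |Ω₀ j i| := by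
      apply Finset.sum_congr rfl
      intro j _
      rw [show Ω₀ i j = Ω₀ j i from by nth_rewrite 1 [← hsym]; exact transpose_apply _ _ _]
    have h3 : ∑ j, |Ω₀ j i| ≤ l1Norm Ω₀ :=
      le_ciSup (f := fun j => ∑ k, |Ω₀ k j|) (Set.Finite.bddAbove (Set.finite_range _)) i
    linarith
  have hbddj : ∀ i, BddAbove (Set.range fun j => |(Ω₀ - OmegaC Ω₀) i j|) :=
    fun i => Set.Finite.bddAbove (Set.finite_range _)
  have hbddi : BddAbove (Set.range fun i => ⨆ j, |(Ω₀ - OmegaC Ω₀) i j|) :=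
    Set.Finite.bddAbove (Set.finite_range _)
  constructor
  · -- lower bound
    -- find i₀ with v i₀ ≥ s / p
    have hsum : ∑ i, v i = s := by simp [hs, dotProduct, onesV]
    obtain ⟨i₀, -, hi₀⟩ : ∃ i ∈ Finset.univ, s / p ≤ v i := by
      apply Finset.exists_le_of_sum_le Finset.univ_nonempty
      rw [hsum]
      rw [Finset.sum_const, Finset.card_univ, Fintype.card_fin, nsmul_eq_mul]
      rw [mul_div_cancel₀ _ (ne_of_gt hppos)]
    have hkey : R⁻¹ ^ 3 / p ≤ |(Ω₀ - OmegaC Ω₀) i₀ i₀| := by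
      rw [hentry i₀ i₀]
      have hvp : 0 < v i₀ := lt_of_lt_of_le (by positivity) hi₀
      have h1 : s⁻¹ * ((s / p) * (s / p)) ≤ s⁻¹ * (v i₀ * v i₀) := by
        apply mul_le_mul_of_nonneg_left _ (le_of_lt (inv_pos.mpr hspos))
        exact mul_le_mul hi₀ hi₀ (by positivity) (le_of_lt hvp)
      have h2 : s⁻¹ * ((s / p) * (s / p)) = s / p ^ 2 := by
        calc s⁻¹ * ((s / p) * (s / p)) = (s⁻¹ * s) * (s / p ^ 2) := by ring
        _ = s / p ^ 2 := by rw [inv_mul_cancel₀ (ne_of_gt hspos), one_mul]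
      have h3 : R⁻¹ / p ≤ s / p ^ 2 := by
        rw [div_le_div_iff₀ (by positivity) (by positivity)]
        calc R⁻¹ * p ^ 2 = (R⁻¹ * p) * p := by ring
        _ ≤ s * p := mul_le_mul_of_nonneg_right hslb (le_of_lt hppos)
      have h4 : R⁻¹ ^ 3 ≤ R⁻¹ := by
        have hle1 : R⁻¹ ≤ 1 := by
          rw [inv_le_one_iff₀]; right; exact le_of_lt hR
        calc R⁻¹ ^ 3 ≤ R⁻¹ ^ 1 := pow_le_pow_of_le_one (le_of_lt hRinv) hle1 (by norm_num)
        _ = R⁻¹ := pow_one _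
      have h5 : R⁻¹ ^ 3 / p ≤ R⁻¹ / p := by
        gcongr
      have h6 : 0 ≤ s⁻¹ * (v i₀ * v i₀) := by positivity
      rw [abs_of_nonneg h6]
      linarith
    calc R⁻¹ ^ 3 / (p:ℝ) ≤ |(Ω₀ - OmegaC Ω₀) i₀ i₀| := hkey
    _ ≤ ⨆ j, |(Ω₀ - OmegaC Ω₀) i₀ j| := le_ciSup (hbddj i₀) i₀
    _ ≤ maxNorm (Ω₀ - OmegaC Ω₀) := le_ciSup hbddi i₀
  · -- upper bound
    apply ciSup_le
    intro i
    apply ciSup_le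
    intro j
    rw [hentry i j]
    have h1 : |s⁻¹ * (v i * v j)| = s⁻¹ * (|v i| * |v j|) := by
      rw [abs_mul, abs_mul, abs_of_pos (inv_pos.mpr hspos)]
    rw [h1]
    have hsinv : s⁻¹ ≤ R / p := by
      have hps : (p : ℝ) ≤ R * s := by
        have := mul_le_mul_of_nonneg_left hslb (le_of_lt hRpos)
        rwa [← mul_assoc, mul_inv_cancel₀ (ne_of_gt hRpos), one_mul] at this
      rw [le_div_iff₀ hppos, inv_mul_le_iff₀ hspos]
      linarith [hps]
    have h2 : |v i| * |v j| ≤ M * M :=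
      mul_le_mul (hvbd i) (hvbd j) (abs_nonneg _) (le_of_lt hM)
    calc s⁻¹ * (|v i| * |v j|) ≤ (R / p) * (M * M) := by
          apply mul_le_mul hsinv h2 (by positivity) (by positivity)
    _ = R * M ^ 2 / p := by ring
end
end

section
/- Suppose R > 1, the eigenvalues of Ω₀ all lie in the interval [1/R, R], and ‖Ω₀‖_{L1} ≤ M_p. Then the compositional precision matrix satisfies ‖Ω_c‖_{L1} ≤ (1 + R²) M_p, and every nonzero eigenvalue μ of Ω_c (i.e., μ ≠ 0 with Ω_c x = μ x for some x ≠ 0) satisfies 1/R ≤ μ ≤ R. -/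
open Matrix

noncomputable section

lemma sub_smul_one_psd {p : ℕ} {A : Matrix (Fin p) (Fin p) ℝ} (hA : A.IsHermitian) {a : ℝ}
    (h : ∀ i, a ≤ hA.eigenvalues i) : (A - a • 1).PosSemidef := by
  have hU : (hA.eigenvectorUnitary : Matrix (Fin p) (Fin p) ℝ) *
      (star hA.eigenvectorUnitary : Matrix (Fin p) (Fin p) ℝ) = 1 :=
    Matrix.mem_unitaryGroup_iff.mp hA.eigenvectorUnitary.2
  have hd : A - a • (1 : Matrix (Fin p) (Fin p) ℝ) =
      (hA.eigenvectorUnitary : Matrix (Fin p) (Fin p) ℝ) *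
        diagonal (fun i => hA.eigenvalues i - a) *
        (hA.eigenvectorUnitary : Matrix (Fin p) (Fin p) ℝ)ᴴ := by
    have hs := hA.spectral_theorem
    rw [Unitary.conjStarAlgAut_apply] at hs
    have hdiag : diagonal (fun i => hA.eigenvalues i - a) =
        diagonal (RCLike.ofReal ∘ hA.eigenvalues) - a • (1 : Matrix (Fin p) (Fin p) ℝ) := by
      ext i j
      by_cases hij : i = j <;> simp [Matrix.diagonal, hij, Matrix.one_apply]
    rw [hdiag, Matrix.mul_sub, Matrix.sub_mul, Matrix.mul_smul, Matrix.smul_mul, mul_one,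
      ← Matrix.star_eq_conjTranspose, hU, ← hs]
  rw [hd]
  exact (Matrix.posSemidef_diagonal_iff.mpr
    (fun i => sub_nonneg.mpr (h i))).mul_mul_conjTranspose_same _

lemma smul_one_sub_psd {p : ℕ} {A : Matrix (Fin p) (Fin p) ℝ} (hA : A.IsHermitian) {a : ℝ}
    (h : ∀ i, hA.eigenvalues i ≤ a) : (a • 1 - A).PosSemidef := by
  have hU : (hA.eigenvectorUnitary : Matrix (Fin p) (Fin p) ℝ) *
      (star hA.eigenvectorUnitary : Matrix (Fin p) (Fin p) ℝ) = 1 :=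
    Matrix.mem_unitaryGroup_iff.mp hA.eigenvectorUnitary.2
  have hd : a • (1 : Matrix (Fin p) (Fin p) ℝ) - A =
      (hA.eigenvectorUnitary : Matrix (Fin p) (Fin p) ℝ) *
        diagonal (fun i => a - hA.eigenvalues i) *
        (hA.eigenvectorUnitary : Matrix (Fin p) (Fin p) ℝ)ᴴ := by
    have hs := hA.spectral_theorem
    rw [Unitary.conjStarAlgAut_apply] at hs
    have hdiag : diagonal (fun i => a - hA.eigenvalues i) =
        a • (1 : Matrix (Fin p) (Fin p) ℝ) - diagonal (RCLike.ofReal ∘ hA.eigenvalues) := by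
      ext i j
      by_cases hij : i = j <;> simp [Matrix.diagonal, hij, Matrix.one_apply]
    rw [hdiag, Matrix.mul_sub, Matrix.sub_mul, Matrix.mul_smul, Matrix.smul_mul, mul_one,
      ← Matrix.star_eq_conjTranspose, hU, ← hs]
  rw [hd]
  exact (Matrix.posSemidef_diagonal_iff.mpr
    (fun i => sub_nonneg.mpr (h i))).mul_mul_conjTranspose_same _

lemma vecMulVec_mulVec' {p : ℕ} (v w x : Fin p → ℝ) :
    vecMulVec v w *ᵥ x = (w ⬝ᵥ x) • v := by
  ext i
  simp only [mulVec, dotProduct, vecMulVec_apply, Pi.smul_apply, smul_eq_mul, Finset.sum_mul]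
  exact Finset.sum_congr rfl fun j _ => by ring

set_option maxHeartbeats 1600000 in
/-- if the eigenvalues of `Ω₀` lie in `[1/R, R]` and `‖Ω₀‖_{L1} ≤ M_p`,
then `‖Ω_c‖_{L1} ≤ (1 + R²) M_p` and every nonzero eigenvalue of `Ω_c` lies in `[1/R, R]`. -/
theorem omegaC_l1_and_eigenvalue_bounds (p : ℕ) (hp : 2 ≤ p)
    (Ω₀ : Matrix (Fin p) (Fin p) ℝ) (hΩ₀ : Ω₀.PosDef) (R M : ℝ) (hR : 1 < R) (hM : 0 < M)
    (heig : ∀ i, hΩ₀.isHermitian.eigenvalues i ∈ Set.Icc R⁻¹ R)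
    (hL1 : l1Norm Ω₀ ≤ M) :
    l1Norm (OmegaC Ω₀) ≤ (1 + R ^ 2) * M ∧
    ∀ (μ : ℝ) (x : Fin p → ℝ), x ≠ 0 → μ ≠ 0 → (OmegaC Ω₀).mulVec x = μ • x →
      1 / R ≤ μ ∧ μ ≤ R := by
  have hp0 : 0 < p := lt_of_lt_of_le two_pos hp
  have hpR : (0:ℝ) < p := by exact_mod_cast hp0
  haveI : Nonempty (Fin p) := ⟨⟨0, hp0⟩⟩
  have hR0 : (0:ℝ) < R := lt_trans one_pos hR
  set v : Fin p → ℝ := Ω₀ *ᵥ onesV p with hvdef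
  set s : ℝ := onesV p ⬝ᵥ v with hsdef
  have hsym : ∀ i j, Ω₀ j i = Ω₀ i j := by
    intro i j
    have := congrFun (congrFun hΩ₀.isHermitian.eq i) j
    simpa [Matrix.conjTranspose_apply] using this
  have hB : ∀ u w : Fin p → ℝ, u ⬝ᵥ Ω₀ *ᵥ w = w ⬝ᵥ Ω₀ *ᵥ u := by
    intro u w
    simp only [dotProduct, mulVec, dotProduct, Finset.mul_sum]
    rw [Finset.sum_comm]
    exact Finset.sum_congr rfl fun i _ => Finset.sum_congr rfl fun j _ => by
      rw [hsym i j]; ring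
  have htr : Ω₀ᵀ = Ω₀ := Matrix.ext fun i j => hsym i j
  have hvecMul : onesV p ᵥ* Ω₀ = v := by
    rw [← Matrix.mulVec_transpose, htr]
  have qlow : ∀ z : Fin p → ℝ, R⁻¹ * (z ⬝ᵥ z) ≤ z ⬝ᵥ Ω₀ *ᵥ z := by
    intro z
    have h2 := (sub_smul_one_psd hΩ₀.isHermitian (fun i => (heig i).1)).dotProduct_mulVec_nonneg z
    simp only [star_trivial, Matrix.sub_mulVec, Matrix.smul_mulVec, Matrix.one_mulVec,
      dotProduct_sub, dotProduct_smul, smul_eq_mul] at h2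
    linarith
  have qhigh : ∀ z : Fin p → ℝ, z ⬝ᵥ Ω₀ *ᵥ z ≤ R * (z ⬝ᵥ z) := by
    intro z
    have h2 := (smul_one_sub_psd hΩ₀.isHermitian (fun i => (heig i).2)).dotProduct_mulVec_nonneg z
    simp only [star_trivial, Matrix.sub_mulVec, Matrix.smul_mulVec, Matrix.one_mulVec,
      dotProduct_sub, dotProduct_smul, smul_eq_mul] at h2
    linarith
  have hones : onesV p ⬝ᵥ onesV p = (p:ℝ) := by simp [onesV, dotProduct]
  have hs_low : (p:ℝ)/R ≤ s := by
    have h := qlow (onesV p)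
    rw [hones] at h
    rw [div_eq_inv_mul]
    exact h
  have hs_pos : 0 < s := lt_of_lt_of_le (div_pos hpR hR0) hs_low
  have hs_high : s ≤ R * p := by
    have h := qhigh (onesV p)
    rwa [hones] at h
  have hss : s * s⁻¹ = 1 := mul_inv_cancel₀ hs_pos.ne'
  have hOc : ∀ x : Fin p → ℝ, OmegaC Ω₀ *ᵥ x = Ω₀ *ᵥ x - (s⁻¹ * (v ⬝ᵥ x)) • v := by
    intro x
    show (Ω₀ - _) *ᵥ x = _
    rw [Matrix.sub_mulVec, Matrix.smul_mulVec, hvecMul, vecMulVec_mulVec', smul_smul]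
  have e2 : v ⬝ᵥ Ω₀ *ᵥ onesV p = v ⬝ᵥ v := rfl
  have e1 : onesV p ⬝ᵥ Ω₀ *ᵥ v = v ⬝ᵥ v := by rw [hB]
  have hvv0 : 0 ≤ v ⬝ᵥ v := Finset.sum_nonneg fun i _ => mul_self_nonneg _
  have hc0 : 0 ≤ v ⬝ᵥ Ω₀ *ᵥ v := by
    have h1 := qlow v
    have h2 : 0 ≤ R⁻¹ * (v ⬝ᵥ v) := by positivity
    linarith
  have hcs : v ⬝ᵥ v ≤ R^2 * p := by
    have h0 := hΩ₀.posSemidef.dotProduct_mulVec_nonneg (v - (s⁻¹ * (v ⬝ᵥ v)) • onesV p)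
    simp only [star_trivial, dotProduct_sub, sub_dotProduct, smul_dotProduct, dotProduct_smul,
      Matrix.mulVec_sub, Matrix.mulVec_smul, smul_eq_mul] at h0
    have e3 : onesV p ⬝ᵥ Ω₀ *ᵥ onesV p = s := rfl
    rw [e1, e2, e3] at h0
    have hbs : v ⬝ᵥ v - s⁻¹ * (v ⬝ᵥ v) * s = 0 := by field_simp; ring
    rw [hbs, mul_zero, sub_zero] at h0
    have e5 : s * (s⁻¹ * (v ⬝ᵥ v) * (v ⬝ᵥ v)) = (v ⬝ᵥ v)^2 := by
      rw [sq]
      field_simp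
    have hkey : (v ⬝ᵥ v)^2 ≤ s * (v ⬝ᵥ Ω₀ *ᵥ v) := by
      nlinarith [mul_nonneg hs_pos.le h0, e5]
    have hc : v ⬝ᵥ Ω₀ *ᵥ v ≤ R * (v ⬝ᵥ v) := qhigh v
    have hmul : s * (v ⬝ᵥ Ω₀ *ᵥ v) ≤ (R * p) * (R * (v ⬝ᵥ v)) :=
      mul_le_mul hs_high hc hc0 (by positivity)
    rcases eq_or_lt_of_le hvv0 with h | h
    · rw [← h]; positivity
    · nlinarith [hkey, hmul, h]
  -- column bounds for Ω₀
  have hcolΩ : ∀ j, ∑ i, |Ω₀ i j| ≤ M := by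
    intro j
    have h := le_ciSup (f := fun j => ∑ i, |Ω₀ i j|)
      (Set.Finite.bddAbove (Set.finite_range _)) j
    exact le_trans h hL1
  have hvM : ∀ j, |v j| ≤ M := by
    intro j
    have hvj : v j = ∑ k, Ω₀ j k := by simp [hvdef, mulVec, dotProduct, onesV]
    rw [hvj]
    calc |∑ k, Ω₀ j k| ≤ ∑ k, |Ω₀ j k| := Finset.abs_sum_le_sum_abs _ _
      _ = ∑ k, |Ω₀ k j| := Finset.sum_congr rfl fun k _ => by rw [hsym k j]
      _ ≤ M := hcolΩ j
  have hv1 : ∑ i, |v i| ≤ R * p := by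
    have h1 : (∑ i, |v i|)^2 ≤ (p:ℝ) * ∑ i, |v i|^2 := by
      have h := sq_sum_le_card_mul_sum_sq (s := (Finset.univ : Finset (Fin p)))
        (f := fun i => |v i|)
      simpa using h
    have h2 : ∑ i, |v i|^2 = v ⬝ᵥ v := by
      simp only [dotProduct, sq_abs]
      exact Finset.sum_congr rfl fun i _ => sq (v i) ▸ by ring
    rw [h2] at h1
    have h3 : (∑ i, |v i|)^2 ≤ (R * p)^2 := by nlinarith [hcs]
    have h4 : 0 ≤ ∑ i, |v i| := Finset.sum_nonneg fun i _ => abs_nonneg _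
    nlinarith [h3, h4, mul_pos hR0 hpR]
  have hsinv : s⁻¹ ≤ R / p := by
    have h1 : (0:ℝ) < (p:ℝ)/R := div_pos hpR hR0
    calc s⁻¹ ≤ ((p:ℝ)/R)⁻¹ := by
          apply inv_anti₀ h1 hs_low
      _ = R / p := by rw [inv_div]
  have hOcE : ∀ i j, OmegaC Ω₀ i j = Ω₀ i j - s⁻¹ * (v i * v j) := by
    intro i j
    show (Ω₀ - _) i j = _
    rw [Matrix.sub_apply, Matrix.smul_apply, hvecMul, vecMulVec_apply, smul_eq_mul]
  have part1 : l1Norm (OmegaC Ω₀) ≤ (1 + R ^ 2) * M := by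
    apply ciSup_le
    intro j
    have step1 : ∑ i, |OmegaC Ω₀ i j| ≤ ∑ i, (|Ω₀ i j| + s⁻¹ * (|v i| * |v j|)) := by
      refine Finset.sum_le_sum fun i _ => ?_
      rw [hOcE]
      calc |Ω₀ i j - s⁻¹ * (v i * v j)| ≤ |Ω₀ i j| + |s⁻¹ * (v i * v j)| := abs_sub _ _
        _ = |Ω₀ i j| + s⁻¹ * (|v i| * |v j|) := by
            rw [abs_mul, abs_mul, abs_of_nonneg (inv_nonneg.mpr hs_pos.le)]
    have step2 : ∑ i, (|Ω₀ i j| + s⁻¹ * (|v i| * |v j|)) =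
        (∑ i, |Ω₀ i j|) + s⁻¹ * (∑ i, |v i|) * |v j| := by
      rw [Finset.sum_add_distrib, Finset.mul_sum, Finset.sum_mul, ← Finset.mul_sum]
      congr 1
      rw [Finset.mul_sum]
      exact Finset.sum_congr rfl fun i _ => by ring
    have step3 : s⁻¹ * (∑ i, |v i|) * |v j| ≤ (R/p) * (R * p) * M := by
      have h1 : 0 ≤ s⁻¹ := inv_nonneg.mpr hs_pos.le
      have h2 : 0 ≤ ∑ i, |v i| := Finset.sum_nonneg fun i _ => abs_nonneg _
      have h3 : 0 ≤ |v j| := abs_nonneg _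
      have h4 : s⁻¹ * (∑ i, |v i|) ≤ (R/p) * (R * p) :=
        mul_le_mul hsinv hv1 h2 (by positivity)
      exact mul_le_mul h4 (hvM j) h3 (by positivity)
    have step4 : (R/p) * (R * p) * M = R^2 * M := by
      field_simp
    calc ∑ i, |OmegaC Ω₀ i j| ≤ (∑ i, |Ω₀ i j|) + s⁻¹ * (∑ i, |v i|) * |v j| := by
          rw [← step2]; exact step1
      _ ≤ M + R^2 * M := by rw [← step4]; exact add_le_add (hcolΩ j) step3
      _ = (1 + R^2) * M := by ring
  refine ⟨part1, ?_⟩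
  intro μ x hx hμ hev
  have hxx : 0 < x ⬝ᵥ x := by
    have h0 : x ⬝ᵥ x ≠ 0 := fun h => hx (dotProduct_self_eq_zero.mp h)
    exact lt_of_le_of_ne (Finset.sum_nonneg fun i _ => mul_self_nonneg _) (Ne.symm h0)
  rw [hOc] at hev
  have ha : onesV p ⬝ᵥ Ω₀ *ᵥ x = v ⬝ᵥ x := by rw [hB, dotProduct_comm]
  have h1x : onesV p ⬝ᵥ x = 0 := by
    have hc := congrArg (fun y => onesV p ⬝ᵥ y) hev
    simp only [dotProduct_sub, dotProduct_smul, smul_eq_mul] at hc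
    have hb : onesV p ⬝ᵥ v = s := rfl
    rw [ha, hb] at hc
    have hz : v ⬝ᵥ x - s⁻¹ * (v ⬝ᵥ x) * s = 0 := by field_simp; ring
    rw [hz] at hc
    rcases mul_eq_zero.mp hc.symm with h | h
    · exact absurd h hμ
    · exact h
  have hquad : μ * (x ⬝ᵥ x) = x ⬝ᵥ Ω₀ *ᵥ x - s⁻¹ * (v ⬝ᵥ x)^2 := by
    have hc := congrArg (fun y => x ⬝ᵥ y) hev
    simp only [dotProduct_sub, dotProduct_smul, smul_eq_mul] at hc
    rw [dotProduct_comm x v] at hc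
    rw [← hc, sq]
    ring
  have hvx2 : 0 ≤ s⁻¹ * (v ⬝ᵥ x)^2 := by positivity
  constructor
  · -- lower bound
    set t : ℝ := s⁻¹ * (v ⬝ᵥ x) with ht
    have hzz := qlow (x - t • onesV p)
    simp only [dotProduct_sub, sub_dotProduct, smul_dotProduct, dotProduct_smul,
      Matrix.mulVec_sub, Matrix.mulVec_smul, smul_eq_mul] at hzz
    have hc1 : x ⬝ᵥ Ω₀ *ᵥ onesV p = v ⬝ᵥ x := by
      rw [show Ω₀ *ᵥ onesV p = v from rfl, dotProduct_comm]
    have hc2 : onesV p ⬝ᵥ Ω₀ *ᵥ onesV p = s := rfl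
    have hc3 : x ⬝ᵥ onesV p = 0 := by rw [dotProduct_comm]; exact h1x
    rw [ha, hc1, hc2, hc3, h1x, hones] at hzz
    have hts : t * (t * s) = t * (v ⬝ᵥ x) := by
      rw [ht]
      field_simp
    have htv : t * (v ⬝ᵥ x) = s⁻¹ * (v ⬝ᵥ x)^2 := by rw [ht, sq]; ring
    have hmain : R⁻¹ * (x ⬝ᵥ x) ≤ μ * (x ⬝ᵥ x) := by
      have hnn : 0 ≤ R⁻¹ * (t * (t * (p:ℝ))) := by
        have : t * (t * (p:ℝ)) = t^2 * p := by ring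
        rw [this]
        positivity
      nlinarith [hzz, hquad, hts, htv, hnn]
    rw [one_div]
    exact le_of_mul_le_mul_right hmain hxx
  · -- upper bound
    have h1 : μ * (x ⬝ᵥ x) ≤ R * (x ⬝ᵥ x) := by
      rw [hquad]
      have := qhigh x
      linarith
    exact le_of_mul_le_mul_right h1 hxx

end
end

section
/- Suppose R > 1 and the eigenvalue condition number of Ω₀ satisfies λ_max(Ω₀)/λ_min(Ω₀) ≤ R. Then the entrywise identification error satisfies ‖Ω₀ − Ω_c‖_max ≤ R ‖Ω₀‖_{L1} / √p. -/
open Matrix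

noncomputable section

namespace IdentAux

variable {p : ℕ} {A : Matrix (Fin p) (Fin p) ℝ}

private lemma star_coe (hA : A.IsHermitian) :
    star (hA.eigenvectorUnitary : Matrix (Fin p) (Fin p) ℝ) =
      (hA.eigenvectorUnitary : Matrix (Fin p) (Fin p) ℝ)ᵀ := by
  rw [Matrix.star_eq_conjTranspose, conjTranspose_eq_transpose_of_trivial]

private lemma hUUt (hA : A.IsHermitian) :
    (hA.eigenvectorUnitary : Matrix (Fin p) (Fin p) ℝ) *
      (hA.eigenvectorUnitary : Matrix (Fin p) (Fin p) ℝ)ᵀ = 1 := by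
  have := Matrix.mem_unitaryGroup_iff.mp hA.eigenvectorUnitary.2
  rwa [star_coe hA] at this

private lemma hUtU (hA : A.IsHermitian) :
    (hA.eigenvectorUnitary : Matrix (Fin p) (Fin p) ℝ)ᵀ *
      (hA.eigenvectorUnitary : Matrix (Fin p) (Fin p) ℝ) = 1 := by
  have := Matrix.mem_unitaryGroup_iff'.mp hA.eigenvectorUnitary.2
  rwa [star_coe hA] at this

private lemma norm_pres (hA : A.IsHermitian) (w : Fin p → ℝ) :
    ((hA.eigenvectorUnitary : Matrix (Fin p) (Fin p) ℝ) *ᵥ w) ⬝ᵥ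
      ((hA.eigenvectorUnitary : Matrix (Fin p) (Fin p) ℝ) *ᵥ w) = w ⬝ᵥ w := by
  rw [dotProduct_mulVec, ← mulVec_transpose, mulVec_mulVec, hUtU hA, one_mulVec]

lemma ynorm (hA : A.IsHermitian) (x : Fin p → ℝ) :
    ((hA.eigenvectorUnitary : Matrix (Fin p) (Fin p) ℝ)ᵀ *ᵥ x) ⬝ᵥ
      ((hA.eigenvectorUnitary : Matrix (Fin p) (Fin p) ℝ)ᵀ *ᵥ x) = x ⬝ᵥ x := by
  rw [dotProduct_mulVec, ← mulVec_transpose, transpose_transpose,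
    mulVec_mulVec, hUUt hA, one_mulVec]

lemma quad_eq (hA : A.IsHermitian) (x : Fin p → ℝ) :
    x ⬝ᵥ A *ᵥ x = ∑ k, hA.eigenvalues k *
      (((hA.eigenvectorUnitary : Matrix (Fin p) (Fin p) ℝ)ᵀ *ᵥ x) k) ^ 2 := by
  conv_lhs => rw [hA.spectral_theorem]
  rw [Unitary.conjStarAlgAut_apply, star_coe hA, ← mulVec_mulVec, ← mulVec_mulVec, dotProduct_mulVec,
    ← mulVec_transpose]
  simp only [dotProduct, mulVec_diagonal, Function.comp, RCLike.ofReal_real_eq_id, id]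
  exact Finset.sum_congr rfl fun k _ => by ring

lemma normsq_eq (hA : A.IsHermitian) (x : Fin p → ℝ) :
    (A *ᵥ x) ⬝ᵥ (A *ᵥ x) = ∑ k, (hA.eigenvalues k) ^ 2 *
      (((hA.eigenvectorUnitary : Matrix (Fin p) (Fin p) ℝ)ᵀ *ᵥ x) k) ^ 2 := by
  conv_lhs => rw [hA.spectral_theorem]
  rw [Unitary.conjStarAlgAut_apply, star_coe hA, ← mulVec_mulVec, ← mulVec_mulVec, norm_pres hA]
  simp only [dotProduct, mulVec_diagonal, Function.comp, RCLike.ofReal_real_eq_id, id]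
  exact Finset.sum_congr rfl fun k _ => by ring


variable [NeZero p]

lemma rayleigh_lower (hA : A.IsHermitian) (x : Fin p → ℝ) :
    lamMin hA * (x ⬝ᵥ x) ≤ x ⬝ᵥ A *ᵥ x := by
  set y := (hA.eigenvectorUnitary : Matrix (Fin p) (Fin p) ℝ)ᵀ *ᵥ x with hy
  have hyx : y ⬝ᵥ y = x ⬝ᵥ x := ynorm hA x
  rw [quad_eq hA x, ← hyx]
  have : y ⬝ᵥ y = ∑ k, (y k) ^ 2 := by simp [dotProduct, pow_two]
  rw [this, Finset.mul_sum]
  refine Finset.sum_le_sum fun k _ => ?_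
  have hm : lamMin hA ≤ hA.eigenvalues k :=
    ciInf_le (Set.Finite.bddBelow (Set.finite_range _)) k
  nlinarith [sq_nonneg (y k)]

lemma mulVec_normsq_upper (hA : A.PosDef) (x : Fin p → ℝ) :
    (A *ᵥ x) ⬝ᵥ (A *ᵥ x) ≤ (lamMax hA.isHermitian) ^ 2 * (x ⬝ᵥ x) := by
  rw [normsq_eq hA.isHermitian x, ← ynorm hA.isHermitian x]
  have hd : ((hA.isHermitian.eigenvectorUnitary : Matrix (Fin p) (Fin p) ℝ)ᵀ *ᵥ x) ⬝ᵥ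
      ((hA.isHermitian.eigenvectorUnitary : Matrix (Fin p) (Fin p) ℝ)ᵀ *ᵥ x) =
      ∑ k, (((hA.isHermitian.eigenvectorUnitary : Matrix (Fin p) (Fin p) ℝ)ᵀ *ᵥ x) k) ^ 2 := by
    simp [dotProduct, pow_two]
  rw [hd, Finset.mul_sum]
  refine Finset.sum_le_sum fun k _ => ?_
  have hM : hA.isHermitian.eigenvalues k ≤ lamMax hA.isHermitian :=
    le_ciSup (Set.Finite.bddAbove (Set.finite_range _)) k
  have h0 : 0 < hA.isHermitian.eigenvalues k := hA.eigenvalues_pos k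
  have hsq : hA.isHermitian.eigenvalues k ^ 2 ≤ lamMax hA.isHermitian ^ 2 :=
    pow_le_pow_left₀ h0.le hM 2
  exact mul_le_mul_of_nonneg_right hsq (sq_nonneg _)

lemma lamMin_pos (hA : A.PosDef) : 0 < lamMin hA.isHermitian := by
  obtain ⟨i, hi⟩ := exists_eq_ciInf_of_finite (f := hA.isHermitian.eigenvalues)
  rw [lamMin, ← hi]; exact hA.eigenvalues_pos i

lemma lamMin_le_lamMax (hA : A.IsHermitian) : lamMin hA ≤ lamMax hA := by
  have i : Fin p := Classical.arbitrary _
  exact le_trans (ciInf_le (Set.Finite.bddBelow (Set.finite_range _)) i)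
    (le_ciSup (Set.Finite.bddAbove (Set.finite_range _)) i)

end IdentAux

/-- if `λ_max(Ω₀)/λ_min(Ω₀) ≤ R`, then
`‖Ω₀ − Ω_c‖_max ≤ R ‖Ω₀‖_{L1}/√p`. -/
theorem identification_error_condition_number_bound (p : ℕ) (hp : 2 ≤ p)
    (Ω₀ : Matrix (Fin p) (Fin p) ℝ) (hΩ₀ : Ω₀.PosDef) (R : ℝ) (hR : 1 < R)
    (hcond : lamMax hΩ₀.isHermitian / lamMin hΩ₀.isHermitian ≤ R) :
    maxNorm (Ω₀ - OmegaC Ω₀) ≤ R * l1Norm Ω₀ / Real.sqrt p := by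
  haveI : NeZero p := ⟨by omega⟩
  have hp0 : (0 : ℝ) < p := by exact_mod_cast Nat.pos_of_ne_zero (by omega)
  have hsq : (0:ℝ) < Real.sqrt p := Real.sqrt_pos.mpr hp0
  set m := lamMin hΩ₀.isHermitian with hmdef
  set M := lamMax hΩ₀.isHermitian with hMdef
  have hm : 0 < m := IdentAux.lamMin_pos hΩ₀
  have hMRm : M ≤ R * m := by rwa [div_le_iff₀ hm] at hcond
  set s := onesV p ⬝ᵥ Ω₀ *ᵥ onesV p with hsdef
  have hones : (onesV p) ⬝ᵥ (onesV p) = (p : ℝ) := by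
    simp [onesV, dotProduct]
  have hs : m * p ≤ s := by
    have := IdentAux.rayleigh_lower hΩ₀.isHermitian (onesV p)
    rwa [hones] at this
  have hspos : 0 < s := lt_of_lt_of_le (by positivity) hs
  -- column sums bounded
  set L := l1Norm Ω₀ with hLdef
  have hcol : ∀ j, ∑ i, |Ω₀ i j| ≤ Real.sqrt p * M := by
    intro j
    have hc := IdentAux.mulVec_normsq_upper hΩ₀ (Pi.single j 1)
    have h1 : (Pi.single j 1 : Fin p → ℝ) ⬝ᵥ (Pi.single j 1) = 1 := by
      simp [dotProduct, Pi.single_apply]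
    have h2 : (Ω₀ *ᵥ Pi.single j 1) ⬝ᵥ (Ω₀ *ᵥ Pi.single j 1) = ∑ i, (Ω₀ i j) ^ 2 := by
      simp [dotProduct, pow_two]
    rw [h1, h2, mul_one] at hc
    have hcs : (∑ i, |Ω₀ i j|) ^ 2 ≤ (p : ℝ) * ∑ i, (Ω₀ i j) ^ 2 := by
      have := sq_sum_le_card_mul_sum_sq (s := (Finset.univ : Finset (Fin p)))
        (f := fun i => |Ω₀ i j|)
      simpa [sq_abs] using this
    have hM0 : 0 ≤ M := le_trans hm.le (by
      have i : Fin p := Classical.arbitrary _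
      exact le_trans (ciInf_le (Set.Finite.bddBelow (Set.finite_range _)) i)
        (le_ciSup (Set.Finite.bddAbove (Set.finite_range _)) i))
    have hb : (∑ i, |Ω₀ i j|) ^ 2 ≤ (Real.sqrt p * M) ^ 2 := by
      have : (Real.sqrt p * M) ^ 2 = (p : ℝ) * M ^ 2 := by
        rw [mul_pow, Real.sq_sqrt hp0.le]
      rw [this]
      exact hcs.trans (by nlinarith)
    have ha : 0 ≤ ∑ i, |Ω₀ i j| := Finset.sum_nonneg fun i _ => abs_nonneg _
    have hb0 : 0 ≤ Real.sqrt p * M := by positivity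
    nlinarith
  have hLle : L ≤ Real.sqrt p * M := by
    rw [hLdef, l1Norm]; exact ciSup_le hcol
  have hLge : ∀ j, ∑ i, |Ω₀ i j| ≤ L := by
    intro j
    rw [hLdef, l1Norm]
    exact le_ciSup (f := fun j => ∑ i, |Ω₀ i j|)
      (Set.Finite.bddAbove (Set.finite_range _)) j
  have hL0 : 0 ≤ L :=
    le_trans (Finset.sum_nonneg fun i _ => abs_nonneg _) (hLge ⟨0, by omega⟩)
  have hsym : ∀ i j, Ω₀ j i = Ω₀ i j := by
    intro i j
    have := hΩ₀.isHermitian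
    rw [Matrix.IsHermitian, conjTranspose_eq_transpose_of_trivial] at this
    exact (congrFun (congrFun this j) i).symm.trans rfl
  -- row vector bounds
  have hrow : ∀ i, |(Ω₀ *ᵥ onesV p) i| ≤ L := by
    intro i
    have h1 : (Ω₀ *ᵥ onesV p) i = ∑ j, Ω₀ i j := by simp [mulVec, dotProduct, onesV]
    rw [h1]
    calc |∑ j, Ω₀ i j| ≤ ∑ j, |Ω₀ i j| := Finset.abs_sum_le_sum_abs _ _
      _ = ∑ j, |Ω₀ j i| := by exact Finset.sum_congr rfl fun j _ => by rw [hsym i j]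
      _ ≤ L := hLge i
  have hvec : ∀ j, |(onesV p ᵥ* Ω₀) j| ≤ L := by
    intro j
    have h1 : (onesV p ᵥ* Ω₀) j = ∑ i, Ω₀ i j := by simp [vecMul, dotProduct, onesV]
    rw [h1]
    exact le_trans (Finset.abs_sum_le_sum_abs _ _) (hLge j)
  -- the error matrix
  have hE : Ω₀ - OmegaC Ω₀ =
      s⁻¹ • Matrix.vecMulVec (Ω₀ *ᵥ onesV p) (onesV p ᵥ* Ω₀) := by
    rw [OmegaC, sub_sub_cancel]
  -- key inequality
  have hkey : L * Real.sqrt p ≤ R * s := by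
    have h1 : L * Real.sqrt p ≤ Real.sqrt p * M * Real.sqrt p :=
      mul_le_mul_of_nonneg_right hLle hsq.le
    have h2 : Real.sqrt p * M * Real.sqrt p = (p : ℝ) * M := by
      rw [mul_comm (Real.sqrt p) M, mul_assoc, Real.mul_self_sqrt hp0.le]; ring
    have h3 : (p : ℝ) * M ≤ (p : ℝ) * (R * m) :=
      mul_le_mul_of_nonneg_left hMRm hp0.le
    have h4 : (p : ℝ) * (R * m) = R * (m * p) := by ring
    have h5 : R * (m * p) ≤ R * s :=
      mul_le_mul_of_nonneg_left hs (by linarith)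
    linarith
  have hfinal : s⁻¹ * (L * L) ≤ R * L / Real.sqrt p := by
    rw [inv_mul_eq_div, div_le_div_iff₀ hspos hsq]
    nlinarith
  rw [maxNorm]
  refine ciSup_le fun i => ciSup_le fun j => ?_
  rw [hE]
  have : |(s⁻¹ • Matrix.vecMulVec (Ω₀ *ᵥ onesV p) (onesV p ᵥ* Ω₀)) i j| =
      s⁻¹ * (|(Ω₀ *ᵥ onesV p) i| * |(onesV p ᵥ* Ω₀) j|) := by
    rw [Matrix.smul_apply, Matrix.vecMulVec_apply, smul_eq_mul, abs_mul, abs_mul,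
      abs_of_pos (inv_pos.mpr hspos)]
  rw [this]
  refine le_trans (le_trans ?_ hfinal) le_rfl
  have := mul_le_mul (hrow i) (hvec j) (abs_nonneg _) hL0
  exact mul_le_mul_of_nonneg_left this (inv_pos.mpr hspos).le

end
end

section
/- Suppose R > 1, the eigenvalues of Ω₀ all lie in the interval [1/R, R], and ‖Ω₀‖_{L1} ≤ M_p. Then the population-level feasibility error satisfies ‖Σ_c Ω₀ − G‖_max ≤ R² M_p / √p. -/
open Matrix

noncomputable section

lemma aux_mul_vecMulVec_mul {p : ℕ} (A B : Matrix (Fin p) (Fin p) ℝ) (u w : Fin p → ℝ) :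
    A * Matrix.vecMulVec u w * B = Matrix.vecMulVec (A.mulVec u) (Matrix.vecMul w B) := by
  ext i j
  simp only [Matrix.mul_apply, Matrix.vecMulVec_apply, Matrix.mulVec, Matrix.vecMul,
    dotProduct, Finset.sum_mul, Finset.mul_sum]
  exact Finset.sum_congr rfl fun l _ => Finset.sum_congr rfl fun k _ => by ring

lemma aux_rayleigh {p : ℕ} (Ω₀ : Matrix (Fin p) (Fin p) ℝ) (hΩ₀ : Ω₀.PosDef) (c : ℝ)
    (heig : ∀ i, c ≤ hΩ₀.isHermitian.eigenvalues i) (v : Fin p → ℝ) :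
    c * (v ⬝ᵥ v) ≤ v ⬝ᵥ Ω₀ *ᵥ v := by
  have hA := hΩ₀.isHermitian
  have hpsd : Matrix.PosSemidef (Ω₀ - c • 1) := by
    have hU : (hA.eigenvectorUnitary : Matrix (Fin p) (Fin p) ℝ) *
        star (hA.eigenvectorUnitary : Matrix (Fin p) (Fin p) ℝ) = 1 :=
      Matrix.mem_unitaryGroup_iff.mp hA.eigenvectorUnitary.2
    have key : Ω₀ - c • 1 =
        (hA.eigenvectorUnitary : Matrix (Fin p) (Fin p) ℝ) *
          Matrix.diagonal (fun i => hA.eigenvalues i - c) *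
          ((hA.eigenvectorUnitary : Matrix (Fin p) (Fin p) ℝ))ᴴ := by
      have hspec := hA.spectral_theorem
      rw [Unitary.conjStarAlgAut_apply] at hspec
      have hdiag : Matrix.diagonal (fun i => hA.eigenvalues i - c) =
          Matrix.diagonal (RCLike.ofReal ∘ hA.eigenvalues) - c • (1 : Matrix (Fin p) (Fin p) ℝ) := by
        rw [Matrix.smul_one_eq_diagonal, ← Matrix.diagonal_sub]
        rfl
      rw [hdiag, Matrix.mul_sub, Matrix.sub_mul, ← Matrix.star_eq_conjTranspose, ← hspec,
        Matrix.mul_smul, mul_one, Matrix.smul_mul, hU]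
    rw [key]
    exact (Matrix.posSemidef_diagonal_iff.mpr fun i => sub_nonneg.mpr (heig i)).mul_mul_conjTranspose_same _
  have h := hpsd.dotProduct_mulVec_nonneg v
  simp only [Matrix.sub_mulVec, Matrix.smul_mulVec, Matrix.one_mulVec, dotProduct_sub,
    dotProduct_smul, smul_eq_mul, star_trivial] at h
  linarith

/-- if the eigenvalues of `Ω₀` lie in `[1/R, R]` and `‖Ω₀‖_{L1} ≤ M_p`,
then `‖Σ_c Ω₀ − G‖_max ≤ R² M_p/√p`. -/
theorem population_feasibility_error_bound (p : ℕ) (hp : 2 ≤ p)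
    (Ω₀ : Matrix (Fin p) (Fin p) ℝ) (hΩ₀ : Ω₀.PosDef) (R M : ℝ) (hR : 1 < R) (hM : 0 < M)
    (heig : ∀ i, hΩ₀.isHermitian.eigenvalues i ∈ Set.Icc R⁻¹ R)
    (hL1 : l1Norm Ω₀ ≤ M) :
    maxNorm (SigmaC Ω₀ * Ω₀ - Gmat p) ≤ R ^ 2 * M / Real.sqrt p := by
  have hp0 : 0 < p := lt_of_lt_of_le two_pos hp
  have hpR : (0:ℝ) < p := by exact_mod_cast hp0
  haveI : Nonempty (Fin p) := ⟨⟨0, hp0⟩⟩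
  have hR0 : (0:ℝ) < R := lt_trans one_pos hR
  have hdet : IsUnit Ω₀.det := (Matrix.isUnit_iff_isUnit_det _).mp hΩ₀.isUnit
  set v : Fin p → ℝ := Ω₀⁻¹ *ᵥ onesV p with hv
  set w : Fin p → ℝ := onesV p ᵥ* Ω₀ with hw
  set u : Fin p → ℝ := Gmat p *ᵥ v with hu
  -- the rank-one identity
  have hid : SigmaC Ω₀ * Ω₀ - Gmat p = (-(p:ℝ)⁻¹) • Matrix.vecMulVec u w := by
    have hinv : Ω₀⁻¹ * Ω₀ = 1 := Matrix.nonsing_inv_mul _ hdet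
    have hs : SigmaC Ω₀ * Ω₀ = (Gmat p * Ω₀⁻¹) * (Gmat p * Ω₀) := by
      simp [SigmaC, mul_assoc]
    have hGΩ : Gmat p * Ω₀ = Ω₀ - (p:ℝ)⁻¹ • (Matrix.vecMulVec (onesV p) (onesV p) * Ω₀) := by
      rw [Gmat, Matrix.sub_mul, one_mul, Matrix.smul_mul]
    have hX : Gmat p * Ω₀⁻¹ * Matrix.vecMulVec (onesV p) (onesV p) * Ω₀
        = Matrix.vecMulVec u w := by
      rw [aux_mul_vecMulVec_mul, hu, hv, hw, Matrix.mulVec_mulVec]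
    rw [hs, hGΩ, Matrix.mul_sub, mul_smul_comm, mul_assoc (Gmat p) _ Ω₀, hinv, mul_one,
      ← mul_assoc, hX, sub_sub_cancel_left, neg_smul]
  -- bound on w
  have hw_bound : ∀ j, |w j| ≤ M := by
    intro j
    have h1 : w j = ∑ i, Ω₀ i j := by
      simp [hw, Matrix.vecMul, dotProduct, onesV]
    calc |w j| ≤ ∑ i, |Ω₀ i j| := by rw [h1]; exact Finset.abs_sum_le_sum_abs _ _
      _ ≤ l1Norm Ω₀ :=
          le_ciSup (f := fun j => ∑ i, |Ω₀ i j|) (Set.Finite.bddAbove (Set.finite_range _)) j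
      _ ≤ M := hL1
  -- bound on u
  have hΩv : Ω₀ *ᵥ v = onesV p := by
    rw [hv, Matrix.mulVec_mulVec, Matrix.mul_nonsing_inv _ hdet, Matrix.one_mulVec]
  set S : ℝ := ∑ i, (v i)^2 with hS
  have hS0 : 0 ≤ S := Finset.sum_nonneg fun i _ => sq_nonneg _
  have hray : R⁻¹ * S ≤ ∑ i, v i := by
    have h := aux_rayleigh Ω₀ hΩ₀ R⁻¹ (fun i => (heig i).1) v
    rw [hΩv] at h
    have h2 : v ⬝ᵥ onesV p = ∑ i, v i := by simp [dotProduct, onesV]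
    have h3 : v ⬝ᵥ v = S := by simp [dotProduct, hS, sq]
    rw [h2, h3] at h
    exact h
  have hCS : (∑ i, v i)^2 ≤ (p:ℝ) * S := by
    have h := Finset.sum_mul_sq_le_sq_mul_sq Finset.univ (fun _ => (1:ℝ)) v
    simpa [Finset.card_univ, hS] using h
  have hSle : S ≤ R^2 * p := by
    rcases eq_or_lt_of_le hS0 with h0 | hpos
    · rw [← h0]; positivity
    · have h1 : S ≤ R * ∑ i, v i := by
        have h := mul_le_mul_of_nonneg_left hray hR0.le
        rwa [← mul_assoc, mul_inv_cancel₀ hR0.ne', one_mul] at h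
      nlinarith [h1, hCS, hpos, sq_nonneg (∑ i, v i)]
  have hu_eq : ∀ i, u i = v i - (p:ℝ)⁻¹ * ∑ k, v k := by
    intro i
    simp [hu, Gmat, Matrix.sub_mulVec, Matrix.smul_mulVec, Matrix.one_mulVec,
      Matrix.mulVec, dotProduct, Matrix.vecMulVec_apply, onesV]
  have husq : ∀ i, (u i)^2 ≤ S := by
    intro i
    set m : ℝ := (p:ℝ)⁻¹ * ∑ k, v k with hm
    have hsum : ∑ k, v k = (p:ℝ) * m := by
      rw [hm, ← mul_assoc, mul_inv_cancel₀ hpR.ne', one_mul]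
    have hexp : ∑ k, (v k - m)^2 = S - (p:ℝ) * m^2 := by
      have e1 : ∀ k ∈ Finset.univ, (v k - m)^2 = (v k)^2 - 2*m*(v k) + m^2 :=
        fun k _ => by ring
      rw [Finset.sum_congr rfl e1, Finset.sum_add_distrib, Finset.sum_sub_distrib,
        ← Finset.mul_sum, Finset.sum_const, Finset.card_univ, Fintype.card_fin,
        nsmul_eq_mul, hsum]
      rw [hS]; ring
    have h1 : (u i)^2 ≤ ∑ k, (v k - m)^2 := by
      rw [hu_eq i]
      exact Finset.single_le_sum (f := fun k => (v k - m)^2) (fun k _ => sq_nonneg _) (Finset.mem_univ i)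
    nlinarith [sq_nonneg m, hpR]
  have hu_bound : ∀ i, |u i| ≤ R * Real.sqrt p := by
    intro i
    calc |u i| = Real.sqrt ((u i)^2) := (Real.sqrt_sq_eq_abs _).symm
      _ ≤ Real.sqrt (R^2 * p) := Real.sqrt_le_sqrt (le_trans (husq i) hSle)
      _ = R * Real.sqrt p := by rw [Real.sqrt_mul (sq_nonneg R), Real.sqrt_sq hR0.le]
  -- entrywise bound
  have hsp : 0 < Real.sqrt p := Real.sqrt_pos.mpr hpR
  have hentry : ∀ i j, |(SigmaC Ω₀ * Ω₀ - Gmat p) i j| ≤ R^2 * M / Real.sqrt p := by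
    intro i j
    rw [hid]
    have habs : |((-(p:ℝ)⁻¹) • Matrix.vecMulVec u w) i j| = (p:ℝ)⁻¹ * (|u i| * |w j|) := by
      simp [Matrix.smul_apply, Matrix.vecMulVec_apply, abs_mul, abs_inv, Nat.abs_cast]
    rw [habs]
    have step1 : (p:ℝ)⁻¹ * (|u i| * |w j|) ≤ (p:ℝ)⁻¹ * ((R * Real.sqrt p) * M) := by
      apply mul_le_mul_of_nonneg_left _ (by positivity)
      exact mul_le_mul (hu_bound i) (hw_bound j) (abs_nonneg _) (by positivity)
    have step2 : (p:ℝ)⁻¹ * ((R * Real.sqrt p) * M) = R * M / Real.sqrt p := by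
      have hss : Real.sqrt p * Real.sqrt p = (p:ℝ) := Real.mul_self_sqrt hpR.le
      field_simp
      linear_combination hss
    have step3 : R * M / Real.sqrt p ≤ R^2 * M / Real.sqrt p := by
      have hRR : R ≤ R^2 := by nlinarith
      gcongr
    linarith [step1, step2, step3]
  have : maxNorm (SigmaC Ω₀ * Ω₀ - Gmat p) = ⨆ i, ⨆ j, |(SigmaC Ω₀ * Ω₀ - Gmat p) i j| := rfl
  rw [this]
  exact ciSup_le fun i => ciSup_le fun j => hentry i j

end
end
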